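/- arXiv:1702.03566 — 2 statements merged into one kernel-verified Lean document; each statement's English description precedes it below -/
import Mathlib

section
/- Suppose λ < ω₁ and ⟨P_α⟩_{α<λ} is a ⊑-increasing sequence of countable special perfect-tree forcing notions (P_α ⊑ P_β whenever α < β < λ). Then there exists a countable special perfect-tree forcing notion Q such that P_α ⊑ Q for every α < λ. -/
noncomputable section

/-- Finite binary strings. -/
abbrev Str : Type := List Bool

/-- Points of Cantor space `2^ω`. -/
abbrev Pt : Type := ℕ → Bool

/-- The length-`n` initial segment of a point of Cantor space, as a string. -/
def seg (a : Pt) (n : ℕ) : Str := (List.range n).map a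

/-- A tree: a set of strings closed under initial segments. -/
def IsTree (T : Set Str) : Prop := ∀ ⦃s t : Str⦄, s <+: t → t ∈ T → s ∈ T

/-- A perfect tree: a nonempty tree in which every string has two
incomparable extensions inside the tree. -/
def IsPerfectTree (T : Set Str) : Prop :=
  T.Nonempty ∧ IsTree T ∧
    ∀ s ∈ T, ∃ t₁ t₂, t₁ ∈ T ∧ t₂ ∈ T ∧ s <+: t₁ ∧ s <+: t₂ ∧ ¬ t₁ <+: t₂ ∧ ¬ t₂ <+: t₁

/-- The restriction `T↾s = {t ∈ T : s ⊆ t or t ⊆ s}`. -/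
def Tres (T : Set Str) (s : Str) : Set Str := {t ∈ T | s <+: t ∨ t <+: s}

/-- The set `[T]` of branches of a tree `T`. -/
def branches (T : Set Str) : Set Pt := {a | ∀ n, seg a n ∈ T}

/-- `s` is the stem (root) of `T`: the longest `s ∈ T` with `T = T↾s`. -/
def IsStem (T : Set Str) (s : Str) : Prop :=
  s ∈ T ∧ T = Tres T s ∧ ∀ t ∈ T, T = Tres T t → t <+: s

open Classical in
/-- The stem `root(T)` of a tree (junk value `[]` if there is none). -/
def stem (T : Set Str) : Str := if h : ∃ s, IsStem T s then h.choose else []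

/-- Simple splitting `T→i = T↾(root(T)⌢i)`. -/
def splitOne (T : Set Str) (i : Bool) : Set Str := Tres T (stem T ++ [i])

/-- Iterated splitting `T→u`. -/
def splitIter (T : Set Str) (u : Str) : Set Str := u.foldl splitOne T

/-- Almost disjointness of trees: finite intersection. -/
def AD (S T : Set Str) : Prop := (S ∩ T).Finite

/-- A perfect-tree forcing notion: a nonempty set of perfect trees closed
under restrictions. -/
def IsPTF (P : Set (Set Str)) : Prop :=
  P.Nonempty ∧ (∀ T ∈ P, IsPerfectTree T) ∧ ∀ T ∈ P, ∀ s ∈ T, Tres T s ∈ P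

/-- `A` is relatively clopen in `B` (as a subspace of Cantor space). -/
def ClopenIn (A B : Set Pt) : Prop := IsClopen ((fun x : B => (x : Pt)) ⁻¹' A)

/-- `A` is relatively open in `B` (as a subspace of Cantor space). -/
def OpenIn (A B : Set Pt) : Prop := IsOpen ((fun x : B => (x : Pt)) ⁻¹' A)

/-- A special perfect-tree forcing notion: `P = {T↾s : s ∈ T ∈ A}` for an
antichain (pairwise a.d. set) `A ⊆ P`. -/
def SpecialPTF (P : Set (Set Str)) : Prop :=
  ∃ A ⊆ P, A.Pairwise AD ∧ P = {R | ∃ T ∈ A, ∃ s ∈ T, R = Tres T s}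

/-- A regular perfect-tree forcing notion: `[S] ∩ [T]` is relatively clopen
in `[S]` or in `[T]`, for all `S, T ∈ P`. -/
def RegularPTF (P : Set (Set Str)) : Prop :=
  ∀ S ∈ P, ∀ T ∈ P,
    ClopenIn (branches S ∩ branches T) (branches S) ∨
    ClopenIn (branches S ∩ branches T) (branches T)

/-- `T ⊆ᶠ ⋃ D`: `[T]` is covered by finitely many `[S]`, `S ∈ D`. -/
def SqFin (T : Set Str) (D : Set (Set Str)) : Prop :=
  ∃ D' ⊆ D, D'.Finite ∧ branches T ⊆ ⋃ S ∈ D', branches S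

/-- `P ⊑ Q`: `Q` is a refinement of `P`. -/
def Refines (P Q : Set (Set Str)) : Prop :=
  (∀ T ∈ P, ∃ S ∈ Q, S ⊆ T) ∧
  (∀ S ∈ Q, SqFin S P) ∧
  (∀ S ∈ Q, ∀ T ∈ P, ClopenIn (branches S ∩ branches T) (branches S) ∧ ¬ T ⊆ S)

/-- `D` is dense in `P`. -/
def DenseIn (D P : Set (Set Str)) : Prop := ∀ T ∈ P, ∃ S ∈ D, S ⊆ T

/-- `D` is pre-dense in `P`. -/
def PreDenseIn (D P : Set (Set Str)) : Prop :=
  DenseIn {T ∈ P | ∃ S ∈ D, T ⊆ S} P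

/-- `P ⊑_D Q`: `Q` locks `D` over `P`. -/
def Locks (P D Q : Set (Set Str)) : Prop :=
  Refines P Q ∧ ∀ S ∈ Q, SqFin S D

/-- A finite splitting system of height `n` over `P`. -/
def IsFSS (P : Set (Set Str)) (n : ℕ) (φ : Str → Set Str) : Prop :=
  (∀ s : Str, s.length ≤ n → φ s ∈ P) ∧
  ∀ (s : Str) (i : Bool), s.length < n → φ (s ++ [i]) ⊆ splitOne (φ s) i

-- Section 1 : strings and segs
@[simp] lemma seg_length (a : Pt) (n : ℕ) : (seg a n).length = n := by
  simp [seg]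

lemma seg_getElem (a : Pt) (n j : ℕ) (hj : j < (seg a n).length) : (seg a n)[j] = a j := by
  simp [seg]

lemma seg_prefix (a : Pt) {m n : ℕ} (h : m ≤ n) : seg a m <+: seg a n := by
  obtain ⟨k, rfl⟩ := Nat.exists_eq_add_of_le h
  simp [seg, List.range_add, List.map_append]

lemma seg_zero (a : Pt) : seg a 0 = [] := by simp [seg]

lemma prefix_comparable {s t u : Str} (hs : s <+: u) (ht : t <+: u) : s <+: t ∨ t <+: s :=
  List.prefix_or_prefix_of_prefix hs ht

lemma eq_seg_of_prefix_seg {s : Str} {a : Pt} {n : ℕ} (h : s <+: seg a n) :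
    s = seg a s.length := by
  have h1 : s.length ≤ n := by simpa using h.length_le
  have h2 : seg a s.length <+: seg a n := seg_prefix a h1
  rcases prefix_comparable h h2 with h3 | h3
  · exact h3.eq_of_length_le (by simp)
  · exact (h3.eq_of_length_le (by simpa using h3.length_le)).symm

/-- Basic clopen cone. -/
def Ns (s : Str) : Set Pt := {x | seg x s.length = s}

lemma mem_Ns_iff {s : Str} {x : Pt} : x ∈ Ns s ↔ seg x s.length = s := Iff.rfl

lemma prefix_seg_of_mem_Ns {s : Str} {x : Pt} (h : x ∈ Ns s) {n : ℕ} (hn : s.length ≤ n) :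
    s <+: seg x n := by
  rw [← h]; exact seg_prefix x hn

lemma mem_Ns_of_prefix_seg {s : Str} {x : Pt} {n : ℕ} (h : s <+: seg x n) : x ∈ Ns s := by
  rw [mem_Ns_iff, ← eq_seg_of_prefix_seg h]

lemma Ns_mono {s t : Str} (h : s <+: t) : Ns t ⊆ Ns s := by
  intro x hx
  exact mem_Ns_of_prefix_seg (h.trans (prefix_seg_of_mem_Ns hx le_rfl))

lemma mem_Ns_seg (x : Pt) (n : ℕ) : x ∈ Ns (seg x n) := by
  simp [Ns]

lemma comparable_of_mem_Ns {s t : Str} {x : Pt} (hs : x ∈ Ns s) (ht : x ∈ Ns t) :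
    s <+: t ∨ t <+: s := by
  rcases le_total s.length t.length with hle | hle
  · exact Or.inl (by rw [← hs, ← ht]; exact seg_prefix x hle)
  · exact Or.inr (by rw [← hs, ← ht]; exact seg_prefix x hle)

lemma isClopen_Ns (s : Str) : IsClopen (Ns s) := by
  have : Ns s = ⋂ j ∈ Finset.range s.length, {x : Pt | x j = s.getD j false} := by
    ext x
    simp only [Ns, Set.mem_setOf_eq, Set.mem_iInter, Finset.mem_range]
    constructor
    · intro hx j hj
      have : (seg x s.length)[j]'(by simpa using hj) = s[j]'hj := by
        simp only [hx]
      rw [seg_getElem] at this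
      simp [this, List.getD_eq_getElem, hj]
    · intro hx
      apply List.ext_getElem (by simp)
      intro j hj1 hj2
      rw [seg_getElem]
      have := hx j (by simpa using hj2)
      simpa [List.getD_eq_getElem, hj2] using this
  rw [this]
  apply isClopen_biInter_finset
  intro j _
  exact (isClopen_discrete {s.getD j false}).preimage (continuous_apply j)

-- Section 2 : trees, Tres, branches
lemma branches_mono {S T : Set Str} (h : S ⊆ T) : branches S ⊆ branches T :=
  fun _ hx n => h (hx n)

lemma seg_mem_of_branches {T : Set Str} {x : Pt} (hx : x ∈ branches T) (n : ℕ) :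
    seg x n ∈ T := hx n

lemma Tres_subset (T : Set Str) (s : Str) : Tres T s ⊆ T := fun _ ht => ht.1

lemma mem_Tres_self {T : Set Str} {s : Str} (hs : s ∈ T) : s ∈ Tres T s :=
  ⟨hs, Or.inl (List.prefix_refl s)⟩

lemma Tres_nil (T : Set Str) : Tres T [] = T := by
  ext t; simp [Tres]

lemma IsTree.Tres {T : Set Str} (hT : IsTree T) (s : Str) : IsTree (Tres T s) := by
  intro u t hut ht
  refine ⟨hT hut ht.1, ?_⟩
  rcases ht.2 with h1 | h1
  · rcases prefix_comparable h1 hut with h2 | h2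
    · exact Or.inl h2
    · exact Or.inr h2
  · exact Or.inr (hut.trans h1)

lemma Tres_Tres_of_prefix {T : Set Str} {s t : Str} (h : s <+: t) :
    Tres (Tres T s) t = Tres T t := by
  ext u
  constructor
  · rintro ⟨⟨hu, _⟩, h2⟩; exact ⟨hu, h2⟩
  · rintro ⟨hu, h2⟩
    refine ⟨⟨hu, ?_⟩, h2⟩
    rcases h2 with h2 | h2
    · exact Or.inl (h.trans h2)
    · rcases prefix_comparable h h2 with h3 | h3
      · exact Or.inl h3
      · exact Or.inr h3

lemma Tres_Tres_of_prefix' {T : Set Str} {s t : Str} (h : t <+: s) :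
    Tres (Tres T s) t = Tres T s := by
  ext u
  constructor
  · rintro ⟨h1, _⟩; exact h1
  · rintro ⟨hu, h2⟩
    refine ⟨⟨hu, h2⟩, ?_⟩
    rcases h2 with h2 | h2
    · exact Or.inl (h.trans h2)
    · rcases prefix_comparable h2 h with h3 | h3
      · exact Or.inr h3
      · exact Or.inl h3

lemma Tres_anti {T : Set Str} {s t : Str} (h : s <+: t) : Tres T t ⊆ Tres T s := by
  rw [← Tres_Tres_of_prefix (T := T) h]
  exact Tres_subset _ _

lemma branches_Tres (T : Set Str) (s : Str) :
    branches (Tres T s) = branches T ∩ Ns s := by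
  ext x
  constructor
  · intro hx
    refine ⟨fun n => (hx n).1, ?_⟩
    have := (hx s.length).2
    rcases this with h1 | h1
    · exact mem_Ns_iff.2 ((h1.eq_of_length_le (by simp)).symm)
    · exact mem_Ns_iff.2 (h1.eq_of_length_le (by simp))
  · rintro ⟨hx, hns⟩ n
    refine ⟨hx n, ?_⟩
    rcases le_total s.length n with h1 | h1
    · exact Or.inl (prefix_seg_of_mem_Ns hns h1)
    · refine Or.inr ?_
      rw [← hns]
      exact seg_prefix x h1

-- Section 2b : perfect trees
lemma IsPerfectTree.isTree {T : Set Str} (h : IsPerfectTree T) : IsTree T := h.2.1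

lemma IsPerfectTree.nil_mem {T : Set Str} (h : IsPerfectTree T) : [] ∈ T := by
  obtain ⟨t, ht⟩ := h.1
  exact h.2.1 List.nil_prefix ht

lemma IsPerfectTree.Tres {T : Set Str} (h : IsPerfectTree T) {s : Str} (hs : s ∈ T) :
    IsPerfectTree (Tres T s) := by
  refine ⟨⟨s, mem_Tres_self hs⟩, h.2.1.Tres s, ?_⟩
  intro t ht
  rcases ht.2 with h1 | h1
  · obtain ⟨t₁, t₂, m1, m2, p1, p2, i1, i2⟩ := h.2.2 t ht.1
    exact ⟨t₁, t₂, ⟨m1, Or.inl (h1.trans p1)⟩, ⟨m2, Or.inl (h1.trans p2)⟩, p1, p2, i1, i2⟩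
  · obtain ⟨t₁, t₂, m1, m2, p1, p2, i1, i2⟩ := h.2.2 s hs
    exact ⟨t₁, t₂, ⟨m1, Or.inl p1⟩, ⟨m2, Or.inl p2⟩, h1.trans p1, h1.trans p2, i1, i2⟩

lemma IsPerfectTree.exists_gt {T : Set Str} (h : IsPerfectTree T) {s : Str} (hs : s ∈ T) :
    ∃ t ∈ T, s <+: t ∧ s.length < t.length := by
  obtain ⟨t₁, t₂, m1, m2, p1, p2, i1, i2⟩ := h.2.2 s hs
  by_cases h1 : t₁ = s
  · subst h1
    exact absurd p2 i1
  · refine ⟨t₁, m1, p1, ?_⟩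
    rcases lt_or_eq_of_le p1.length_le with h2 | h2
    · exact h2
    · exact absurd (p1.eq_of_length h2).symm h1

lemma IsPerfectTree.exists_longer {T : Set Str} (h : IsPerfectTree T) {s : Str} (hs : s ∈ T)
    (m : ℕ) : ∃ t ∈ T, s <+: t ∧ m ≤ t.length := by
  induction m with
  | zero => exact ⟨s, hs, List.prefix_refl s, Nat.zero_le _⟩
  | succ m ih =>
    obtain ⟨t, ht, hp, hlen⟩ := ih
    obtain ⟨t', ht', hp', hlen'⟩ := h.exists_gt ht
    exact ⟨t', ht', hp.trans hp', by omega⟩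

lemma IsPerfectTree.exists_split {T : Set Str} (h : IsPerfectTree T) {s : Str} (hs : s ∈ T)
    (m : ℕ) : ∃ t₁ ∈ T, ∃ t₂ ∈ T, s <+: t₁ ∧ s <+: t₂ ∧ ¬ t₁ <+: t₂ ∧ ¬ t₂ <+: t₁ ∧
      m ≤ t₁.length ∧ m ≤ t₂.length := by
  obtain ⟨t, ht, hp, hlen⟩ := h.exists_longer hs m
  obtain ⟨t₁, t₂, m1, m2, p1, p2, i1, i2⟩ := h.2.2 t ht
  exact ⟨t₁, m1, t₂, m2, hp.trans p1, hp.trans p2, i1, i2,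
    le_trans hlen p1.length_le, le_trans hlen p2.length_le⟩

lemma IsPerfectTree.infinite {T : Set Str} (h : IsPerfectTree T) : T.Infinite := by
  intro hfin
  have hb : BddAbove (List.length '' T) := (hfin.image _).bddAbove
  obtain ⟨L, hL⟩ := hb
  obtain ⟨t, ht, _, hlen⟩ := h.exists_longer h.nil_mem (L + 1)
  have := hL ⟨t, ht, rfl⟩
  omega

lemma prefix_take_of_prefix {s l : Str} (h : s <+: l) {n : ℕ} (hn : s.length ≤ n) :
    s <+: l.take n := by
  have h1 : s = l.take s.length := List.prefix_iff_eq_take.1 h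
  have : l.take s.length = (l.take n).take s.length := by
    rw [List.take_take, min_eq_left hn]
  rw [h1, this]
  exact List.take_prefix _ _

/-- Limit of an increasing chain of strings. -/
def chainLim (c : ℕ → Str) : Pt := fun j => (c (j + 1)).getD j false

lemma seg_chainLim (c : ℕ → Str) (hlen : ∀ n, n ≤ (c n).length)
    (hpref : ∀ m n, m ≤ n → c m <+: c n) (n : ℕ) :
    ∀ m, n ≤ m → seg (chainLim c) n = (c m).take n := by
  intro m hm
  apply List.ext_getElem
  · simp [min_eq_left (le_trans hm (hlen m)), le_trans hm (hlen m)]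
  · intro j hj1 hj2
    have hjn : j < n := by simpa using hj1
    rw [seg_getElem]
    rw [List.getElem_take]
    have hjm : j < (c (j+1)).length := lt_of_lt_of_le (Nat.lt_succ_self j) (hlen (j+1))
    have hpe := (hpref (j+1) m (by omega)).getElem hjm
    unfold chainLim
    rw [List.getD_eq_getElem _ _ hjm, hpe]

lemma chainLim_branches {T : Set Str} (hT : IsTree T) (c : ℕ → Str)
    (hlen : ∀ n, n ≤ (c n).length) (hpref : ∀ m n, m ≤ n → c m <+: c n)
    (hmem : ∀ n, c n ∈ T) : chainLim c ∈ branches T := by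
  intro n
  rw [seg_chainLim c hlen hpref n n le_rfl]
  exact hT (List.take_prefix _ _) (hmem n)

/-- König's lemma for binary trees. -/
lemma exists_branch_of_infinite {T : Set Str} (hT : IsTree T) (hinf : T.Infinite) :
    ∃ x, x ∈ branches T := by
  classical
  have hstep : ∀ s : Str, {t ∈ T | s <+: t}.Infinite → ∃ i : Bool,
      {t ∈ T | s ++ [i] <+: t}.Infinite := by
    intro s hs
    by_contra hcon
    push_neg at hcon
    have h0 : ¬ {t ∈ T | s ++ [false] <+: t}.Infinite := Set.not_infinite.2 (hcon false)
    have h1 : ¬ {t ∈ T | s ++ [true] <+: t}.Infinite := Set.not_infinite.2 (hcon true)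
    rw [Set.not_infinite] at h0 h1
    apply hs
    have hsub : {t ∈ T | s <+: t} ⊆ {s} ∪ ({t ∈ T | s ++ [false] <+: t} ∪
        {t ∈ T | s ++ [true] <+: t}) := by
      rintro t ⟨ht, hp⟩
      by_cases he : t = s
      · exact Or.inl (by simp [he])
      · have hlt : s.length < t.length := by
          rcases lt_or_eq_of_le hp.length_le with h2 | h2
          · exact h2
          · exact absurd (hp.eq_of_length h2).symm he
        have htake : s ++ [t[s.length]] <+: t := by
          have h3 : t.take (s.length + 1) = t.take s.length ++ [t[s.length]] := by
            rw [List.take_succ]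
            simp [List.getElem?_eq_getElem hlt]
          have h4 : t.take s.length = s := (List.prefix_iff_eq_take.1 hp).symm
          have h5 : s ++ [t[s.length]] = t.take (s.length + 1) := by rw [h3, h4]
          rw [h5]
          exact List.take_prefix _ _
        cases hb : t[s.length] with
        | false => exact Or.inr (Or.inl ⟨ht, by rwa [hb] at htake⟩)
        | true => exact Or.inr (Or.inr ⟨ht, by rwa [hb] at htake⟩)
    exact Set.Finite.subset (((Set.finite_singleton s).union (h0.union h1))) hsub
  let pick : Str → Bool := fun s =>
    if h : {t ∈ T | s <+: t}.Infinite then Classical.choose (hstep s h) else false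
  let c : ℕ → Str := fun n => Nat.rec [] (fun _ s => s ++ [pick s]) n
  have hc0 : {t ∈ T | c 0 <+: t}.Infinite := by
    simpa [c] using hinf
  have hcsucc : ∀ n, c (n+1) = c n ++ [pick (c n)] := fun n => rfl
  have hcinf : ∀ n, {t ∈ T | c n <+: t}.Infinite := by
    intro n
    induction n with
    | zero => exact hc0
    | succ n ih =>
      rw [hcsucc n]
      have : pick (c n) = Classical.choose (hstep (c n) ih) := by simp [pick, ih]
      rw [this]
      exact Classical.choose_spec (hstep (c n) ih)
  have hclen : ∀ n, n ≤ (c n).length := by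
    intro n
    induction n with
    | zero => simp [c]
    | succ n ih => rw [hcsucc n]; simp; omega
  have hcpref : ∀ m n, m ≤ n → c m <+: c n := by
    intro m n hmn
    induction n with
    | zero => have : m = 0 := by omega
              subst this; exact List.prefix_refl _
    | succ n ih =>
      rcases Nat.lt_or_ge m (n+1) with h1 | h1
      · exact (ih (by omega)).trans (by rw [hcsucc n]; exact List.prefix_append _ _)
      · have : m = n + 1 := by omega
        subst this; exact List.prefix_refl _
  have hcmem : ∀ n, c n ∈ T := by
    intro n
    obtain ⟨t, ⟨ht, hp⟩⟩ := (hcinf n).nonempty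
    exact hT hp ht
  exact ⟨chainLim c, chainLim_branches hT c hclen hcpref hcmem⟩

lemma IsPerfectTree.exists_branch {T : Set Str} (h : IsPerfectTree T) {s : Str} (hs : s ∈ T) :
    ∃ x ∈ branches T, x ∈ Ns s := by
  classical
  let next : Str → Str := fun u =>
    if hu : u ∈ T then Classical.choose (h.exists_gt hu) else u
  have hnext : ∀ u, u ∈ T → next u ∈ T ∧ u <+: next u ∧ u.length < (next u).length := by
    intro u hu
    have : next u = Classical.choose (h.exists_gt hu) := by simp [next, hu]
    rw [this]
    obtain ⟨h1, h2, h3⟩ := Classical.choose_spec (h.exists_gt hu)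
    exact ⟨h1, h2, h3⟩
  let c : ℕ → Str := fun n => Nat.rec s (fun _ u => next u) n
  have hcsucc : ∀ n, c (n+1) = next (c n) := fun n => rfl
  have hcmem : ∀ n, c n ∈ T := by
    intro n
    induction n with
    | zero => exact hs
    | succ n ih => rw [hcsucc n]; exact (hnext _ ih).1
  have hcpref1 : ∀ n, c n <+: c (n+1) := fun n => by
    rw [hcsucc n]; exact (hnext _ (hcmem n)).2.1
  have hclt : ∀ n, (c n).length < (c (n+1)).length := fun n => by
    rw [hcsucc n]; exact (hnext _ (hcmem n)).2.2
  have hclen : ∀ n, n ≤ (c n).length := by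
    intro n
    induction n with
    | zero => omega
    | succ n ih => have := hclt n; omega
  have hcpref : ∀ m n, m ≤ n → c m <+: c n := by
    intro m n hmn
    induction n with
    | zero => have : m = 0 := by omega
              subst this; exact List.prefix_refl _
    | succ n ih =>
      rcases Nat.lt_or_ge m (n+1) with h1 | h1
      · exact (ih (by omega)).trans (hcpref1 n)
      · have : m = n + 1 := by omega
        subst this; exact List.prefix_refl _
  refine ⟨chainLim c, chainLim_branches h.2.1 c hclen hcpref hcmem, ?_⟩
  apply mem_Ns_of_prefix_seg (n := (c s.length).length)
  rw [seg_chainLim c hclen hcpref _ _ (le_refl _)]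
  have h5 : s <+: c ((c s.length).length) := hcpref 0 _ (Nat.zero_le _)
  exact prefix_take_of_prefix h5 (le_trans (hclen s.length) (by omega))

-- ClopenIn toolkit
lemma clopenIn_congr {A A' B : Set Pt} (h : A ∩ B = A' ∩ B) (hc : ClopenIn A B) :
    ClopenIn A' B := by
  unfold ClopenIn at *
  have : (fun x : B => (x : Pt)) ⁻¹' A = (fun x : B => (x : Pt)) ⁻¹' A' := by
    ext ⟨x, hx⟩
    constructor
    · intro hA
      have : x ∈ A ∩ B := ⟨hA, hx⟩
      rw [h] at this
      exact this.1
    · intro hA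
      have : x ∈ A' ∩ B := ⟨hA, hx⟩
      rw [← h] at this
      exact this.1
  rwa [this] at hc

lemma clopenIn_of_clopen {V : Set Pt} (hV : IsClopen V) (B : Set Pt) : ClopenIn V B :=
  hV.preimage continuous_subtype_val

lemma clopenIn_empty (B : Set Pt) : ClopenIn ∅ B := by
  unfold ClopenIn
  simpa using isClopen_empty

lemma clopenIn_mono {A B C : Set Pt} (hc : ClopenIn A B) (hCB : C ⊆ B) :
    ClopenIn (A ∩ C) C := by
  unfold ClopenIn at *
  let e : C → B := fun x => ⟨x.1, hCB x.2⟩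
  have he : Continuous e := Continuous.subtype_mk continuous_subtype_val _
  have : (fun x : C => (x : Pt)) ⁻¹' (A ∩ C) = e ⁻¹' ((fun x : B => (x : Pt)) ⁻¹' A) := by
    ext ⟨x, hx⟩
    simp [e, hx]
  rw [this]
  exact hc.preimage he

lemma clopenIn_trans {A B C : Set Pt} (hAB : A ⊆ B) (hBC : B ⊆ C)
    (h1 : ClopenIn A B) (h2 : ClopenIn B C) : ClopenIn A C := by
  unfold ClopenIn at *
  set B' : Set C := (fun x : C => (x : Pt)) ⁻¹' B with hB'
  let e : B' → B := fun x => ⟨x.1.1, x.2⟩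
  have he : Continuous e := Continuous.subtype_mk (continuous_subtype_val.comp continuous_subtype_val) _
  have hpre : IsClopen ((fun x : B' => (x : C)) ⁻¹' ((fun x : C => (x : Pt)) ⁻¹' A)) := by
    have : ((fun x : B' => (x : C)) ⁻¹' ((fun x : C => (x : Pt)) ⁻¹' A)) =
        e ⁻¹' ((fun x : B => (x : Pt)) ⁻¹' A) := rfl
    rw [this]
    exact h1.preimage he
  have hopen : IsOpenMap (fun x : B' => (x : C)) := h2.isOpen.isOpenMap_subtype_val
  have hclosed : IsClosedMap (fun x : B' => (x : C)) :=
    h2.isClosed.isClosedEmbedding_subtypeVal.isClosedMap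
  have himg : (fun x : B' => (x : C)) '' ((fun x : B' => (x : C)) ⁻¹' ((fun x : C => (x : Pt)) ⁻¹' A))
      = (fun x : C => (x : Pt)) ⁻¹' A := by
    apply Set.image_preimage_eq_of_subset
    rintro ⟨x, hxC⟩ hxA
    exact ⟨⟨⟨x, hxC⟩, hAB hxA⟩, rfl⟩
  constructor
  · rw [← himg]
    exact hclosed _ hpre.isClosed
  · rw [← himg]
    exact hopen _ hpre.isOpen

lemma clopenIn_union {A A' B : Set Pt} (h1 : ClopenIn A B) (h2 : ClopenIn A' B) :
    ClopenIn (A ∪ A') B := by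
  unfold ClopenIn at *
  rw [Set.preimage_union]
  exact h1.union h2

lemma clopenIn_biUnion {ι : Type*} {s : Set ι} (hs : s.Finite) {f : ι → Set Pt} {B : Set Pt}
    (h : ∀ i ∈ s, ClopenIn (f i) B) : ClopenIn (⋃ i ∈ s, f i) B := by
  unfold ClopenIn at *
  rw [Set.preimage_iUnion₂]
  exact Set.Finite.isClopen_biUnion hs h

-- SqFin toolkit
lemma sqfin_mono {S S' : Set Str} {D : Set (Set Str)} (h : SqFin S D)
    (hsub : branches S' ⊆ branches S) : SqFin S' D := by
  obtain ⟨D', h1, h2, h3⟩ := h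
  exact ⟨D', h1, h2, hsub.trans h3⟩

lemma sqfin_self {S : Set Str} {D : Set (Set Str)} (h : S ∈ D) : SqFin S D :=
  ⟨{S}, by simpa using h, Set.finite_singleton S, by simp⟩

lemma sqfin_of_cover {S : Set Str} {D : Set (Set Str)} {F : Set (Set Str)} (hF : F.Finite)
    (hcov : branches S ⊆ ⋃ R ∈ F, branches R) (hR : ∀ R ∈ F, SqFin R D) : SqFin S D := by
  classical
  choose! d hd1 hd2 hd3 using hR
  refine ⟨⋃ R ∈ F, d R, ?_, ?_, ?_⟩
  · exact Set.iUnion₂_subset fun R hRF => hd1 R hRF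
  · exact hF.biUnion fun R hRF => hd2 R hRF
  · intro x hx
    obtain ⟨R, hRF, hxR⟩ := by simpa using hcov hx
    have := hd3 R hRF hxR
    simp only [Set.mem_iUnion] at this ⊢
    obtain ⟨V, hV1, hV2⟩ := this
    exact ⟨V, ⟨R, hRF, hV1⟩, hV2⟩

-- AD lemmas
lemma branches_disjoint_of_AD {S T : Set Str} (h : AD S T) :
    branches S ∩ branches T = ∅ := by
  by_contra hne
  obtain ⟨x, hxS, hxT⟩ := Set.nonempty_iff_ne_empty.2 hne
  have hinj : Function.Injective (fun n => seg x n) := by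
    intro m n hmn
    simp only at hmn
    have : (seg x m).length = (seg x n).length := by rw [hmn]
    simpa using this
  exact (Set.infinite_of_injective_forall_mem (s := S ∩ T) hinj
    (fun n => ⟨hxS n, hxT n⟩)) h

-- Section 4 : special PTF clopen lemma
lemma special_decomp {P' : Set (Set Str)} {A : Set (Set Str)}
    (hPeq : P' = {R | ∃ T ∈ A, ∃ s ∈ T, R = Tres T s}) {R : Set Str} (hR : R ∈ P') :
    ∃ T₀ ∈ A, ∃ s ∈ T₀, R = Tres T₀ s := by
  rw [hPeq] at hR
  exact hR

lemma special_clopen {P' : Set (Set Str)} (hsp : SpecialPTF P')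
    {R T : Set Str} (hR : R ∈ P') (hT : T ∈ P') :
    ClopenIn (branches R ∩ branches T) (branches R) := by
  obtain ⟨A, hA, hpair, hPeq⟩ := hsp
  obtain ⟨R₀, hR₀, s', hs', rfl⟩ := special_decomp hPeq hR
  obtain ⟨T₀, hT₀, s, hs, rfl⟩ := special_decomp hPeq hT
  by_cases he : R₀ = T₀
  · subst he
    apply clopenIn_congr (A := Ns s)
    · rw [branches_Tres, branches_Tres]
      ext x
      simp only [Set.mem_inter_iff, Set.mem_setOf_eq]
      tauto
    · exact clopenIn_of_clopen (isClopen_Ns s) _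
  · apply clopenIn_congr (A := (∅ : Set Pt))
    · have hdis := branches_disjoint_of_AD (hpair hR₀ hT₀ he)
      ext x
      rw [branches_Tres, branches_Tres]
      simp only [Set.mem_inter_iff, Set.mem_empty_iff_false, false_and, false_iff]
      rintro ⟨⟨⟨h1, _⟩, h2, _⟩, _⟩
      have hx : x ∈ branches R₀ ∩ branches T₀ := ⟨h1, h2⟩
      rw [hdis] at hx
      exact hx
    · exact clopenIn_empty _

-- Section 5 : the fusion construction
def FHyp (P : Ordinal → Set (Set Str)) (c : ℕ → Ordinal) : Prop :=
  ∀ n, (∀ T ∈ P (c n), IsPerfectTree T) ∧ (∀ T ∈ P (c n), ∀ s ∈ T, Tres T s ∈ P (c n)) ∧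
    (∀ T ∈ P (c n), ∃ S ∈ P (c (n+1)), S ⊆ T)

lemma fstep_ex (P : Ordinal → Set (Set Str)) (c : ℕ → Ordinal) (n : ℕ) (R : Set Str) (v : Str) :
    ∃ z : Str × Str × Str × Set Str × Set Str,
      (FHyp P c ∧ R ∈ P (c n) ∧ v ∈ R) →
      (z.1 ∈ R ∧ z.2.1 ∈ R ∧ v <+: z.1 ∧ v <+: z.2.1 ∧ ¬ z.1 <+: z.2.1 ∧ ¬ z.2.1 <+: z.1 ∧
       n < z.1.length ∧ n < z.2.1.length ∧
       z.2.2.1 ∈ R ∧ v <+: z.2.2.1 ∧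
       (¬ z.2.2.1 <+: z.1) ∧ (¬ z.1 <+: z.2.2.1) ∧ (¬ z.2.2.1 <+: z.2.1) ∧ (¬ z.2.1 <+: z.2.2.1) ∧
       z.2.2.2.1 ∈ P (c (n+1)) ∧ z.2.2.2.1 ⊆ Tres R z.1 ∧
       z.2.2.2.2 ∈ P (c (n+1)) ∧ z.2.2.2.2 ⊆ Tres R z.2.1) := by
  by_cases hh : FHyp P c ∧ R ∈ P (c n) ∧ v ∈ R
  · obtain ⟨hF, hR, hv⟩ := hh
    have hperf : IsPerfectTree R := (hF n).1 R hR
    obtain ⟨a₀, a₁, ma0, ma1, pa0, pa1, ia0, ia1⟩ := hperf.2.2 v hv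
    obtain ⟨t₀, mt0, t₁, mt1, pt0, pt1, it0, it1, l0, l1⟩ := hperf.exists_split ma0 (n+1)
    have ha1t : ∀ t : Str, a₀ <+: t → (¬ a₁ <+: t ∧ ¬ t <+: a₁) := by
      intro t hat
      constructor
      · intro hcon
        rcases prefix_comparable hat hcon with h2 | h2
        · exact ia0 h2
        · exact ia1 h2
      · intro hcon
        exact ia0 (hat.trans hcon)
    obtain ⟨S₀, hS0, hS0sub⟩ := (hF n).2.2 (Tres R t₀) ((hF n).2.1 R hR t₀ mt0)
    obtain ⟨S₁, hS1, hS1sub⟩ := (hF n).2.2 (Tres R t₁) ((hF n).2.1 R hR t₁ mt1)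
    refine ⟨(t₀, t₁, a₁, S₀, S₁), fun _ => ?_⟩
    refine ⟨mt0, mt1, pa0.trans pt0, pa0.trans pt1, it0, it1, l0, l1, ma1, pa1,
      (ha1t t₀ pt0).1, (ha1t t₀ pt0).2, (ha1t t₁ pt1).1, (ha1t t₁ pt1).2,
      hS0, hS0sub, hS1, hS1sub⟩
  · exact ⟨([], [], [], ∅, ∅), fun hcon => absurd hcon hh⟩

def fstep (P : Ordinal → Set (Set Str)) (c : ℕ → Ordinal) (n : ℕ) (R : Set Str) (v : Str) :
    Str × Str × Str × Set Str × Set Str :=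
  (fstep_ex P c n R v).choose

def fnode (P : Ordinal → Set (Set Str)) (c : ℕ → Ordinal) (Rt : Set Str) :
    List Bool → Set Str × Str :=
  fun p => List.rec (Rt, ([] : Str))
    (fun i p ih =>
      ((bif i then (fstep P c p.length ih.1 ih.2).2.2.2.2 else (fstep P c p.length ih.1 ih.2).2.2.2.1),
       (bif i then (fstep P c p.length ih.1 ih.2).2.1 else (fstep P c p.length ih.1 ih.2).1))) p

section Fusion

variable (P : Ordinal → Set (Set Str)) (c : ℕ → Ordinal) (Rt : Set Str)

def fR (p : List Bool) : Set Str := (fnode P c Rt p).1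
def fv (p : List Bool) : Str := (fnode P c Rt p).2
def fhole (p : List Bool) : Str := (fstep P c p.length (fR P c Rt p) (fv P c Rt p)).2.2.1

lemma fnode_nil : fnode P c Rt [] = (Rt, ([] : Str)) := rfl

lemma fnode_cons (i : Bool) (p : List Bool) :
    fnode P c Rt (i :: p) =
      ((bif i then (fstep P c p.length (fR P c Rt p) (fv P c Rt p)).2.2.2.2
        else (fstep P c p.length (fR P c Rt p) (fv P c Rt p)).2.2.2.1),
       (bif i then (fstep P c p.length (fR P c Rt p) (fv P c Rt p)).2.1
        else (fstep P c p.length (fR P c Rt p) (fv P c Rt p)).1)) := rfl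

variable {P c Rt}

lemma fusion_inv (hF : FHyp P c) (hRt : Rt ∈ P (c 0)) : ∀ p : List Bool,
    fR P c Rt p ∈ P (c p.length) ∧ fv P c Rt p ∈ fR P c Rt p ∧
      p.length ≤ (fv P c Rt p).length ∧ branches (fR P c Rt p) ⊆ Ns (fv P c Rt p) := by
  intro p
  induction p with
  | nil =>
    refine ⟨hRt, ?_, by simp [fv, fnode_nil], ?_⟩
    · have : IsPerfectTree Rt := (hF 0).1 Rt hRt
      simpa [fR, fv, fnode_nil] using this.nil_mem
    · intro x _
      simp [fv, fnode_nil, Ns, seg_zero]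
  | cons i p ih =>
    obtain ⟨hR, hv, hlen, hNs⟩ := ih
    have spec := (fstep_ex P c p.length (fR P c Rt p) (fv P c Rt p)).choose_spec ⟨hF, hR, hv⟩
    rw [show (fstep_ex P c p.length (fR P c Rt p) (fv P c Rt p)).choose
        = fstep P c p.length (fR P c Rt p) (fv P c Rt p) from rfl] at spec
    set z := fstep P c p.length (fR P c Rt p) (fv P c Rt p) with hzdef
    obtain ⟨mt0, mt1, pt0, pt1, it0, it1, l0, l1, _, _, _, _, _, _,
      hS0, hS0sub, hS1, hS1sub⟩ := spec
    have key : ∀ (S : Set Str) (t : Str), S ∈ P (c (p.length+1)) →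
        S ⊆ Tres (fR P c Rt p) t → p.length < t.length →
        S ∈ P (c (p.length+1)) ∧ t ∈ S ∧ p.length+1 ≤ t.length ∧ branches S ⊆ Ns t := by
      intro S t hS hsub hlt
      have hperfS : IsPerfectTree S := (hF (p.length+1)).1 S hS
      have hbr : branches S ⊆ Ns t := by
        intro x hx
        have hx2 := branches_mono hsub hx
        rw [branches_Tres] at hx2
        exact hx2.2
      refine ⟨hS, ?_, by omega, hbr⟩
      obtain ⟨u, hu⟩ := hperfS.1
      obtain ⟨x, hxb, _⟩ := hperfS.exists_branch hu
      have hxNs : x ∈ Ns t := hbr hxb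
      have hseg : seg x t.length ∈ S := hxb t.length
      rwa [hxNs] at hseg
    have hfReq : fR P c Rt (i :: p) = (bif i then z.2.2.2.2 else z.2.2.2.1) := rfl
    have hfveq : fv P c Rt (i :: p) = (bif i then z.2.1 else z.1) := rfl
    have hlc : (i :: p).length = p.length + 1 := rfl
    cases i
    · simp only [cond_false] at hfReq hfveq
      rw [hfReq, hfveq, hlc]
      obtain ⟨k1, k2, k3, k4⟩ := key z.2.2.2.1 z.1 hS0 hS0sub l0
      exact ⟨k1, k2, k3, k4⟩
    · simp only [cond_true] at hfReq hfveq
      rw [hfReq, hfveq, hlc]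
      obtain ⟨k1, k2, k3, k4⟩ := key z.2.2.2.2 z.2.1 hS1 hS1sub l1
      exact ⟨k1, k2, k3, k4⟩

lemma fusion_cons_spec (hF : FHyp P c) (hRt : Rt ∈ P (c 0)) (p : List Bool) :
    (∀ i, fv P c Rt (i::p) ∈ fR P c Rt p) ∧
    (∀ i, fv P c Rt p <+: fv P c Rt (i::p)) ∧
    (∀ i, fR P c Rt (i::p) ⊆ Tres (fR P c Rt p) (fv P c Rt (i::p))) ∧
    (¬ fv P c Rt (false::p) <+: fv P c Rt (true::p)) ∧
    (¬ fv P c Rt (true::p) <+: fv P c Rt (false::p)) ∧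
    fhole P c Rt p ∈ fR P c Rt p ∧ (fv P c Rt p <+: fhole P c Rt p) ∧
    (∀ i, ¬ fhole P c Rt p <+: fv P c Rt (i::p)) ∧
    (∀ i, ¬ fv P c Rt (i::p) <+: fhole P c Rt p) := by
  obtain ⟨hR, hv, hlen, hNs⟩ := fusion_inv hF hRt p
  have spec := (fstep_ex P c p.length (fR P c Rt p) (fv P c Rt p)).choose_spec ⟨hF, hR, hv⟩
  rw [show (fstep_ex P c p.length (fR P c Rt p) (fv P c Rt p)).choose
      = fstep P c p.length (fR P c Rt p) (fv P c Rt p) from rfl] at spec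
  set z := fstep P c p.length (fR P c Rt p) (fv P c Rt p) with hzdef
  obtain ⟨mt0, mt1, pt0, pt1, it0, it1, l0, l1, ma1, pa1, i01, i02, i11, i12,
    hS0, hS0sub, hS1, hS1sub⟩ := spec
  have hv0 : fv P c Rt (false :: p) = z.1 := rfl
  have hv1 : fv P c Rt (true :: p) = z.2.1 := rfl
  have hR0 : fR P c Rt (false :: p) = z.2.2.2.1 := rfl
  have hR1 : fR P c Rt (true :: p) = z.2.2.2.2 := rfl
  have hh : fhole P c Rt p = z.2.2.1 := rfl
  refine ⟨?_, ?_, ?_, ?_, ?_, ?_, ?_, ?_, ?_⟩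
  · intro i; cases i
    · rw [hv0]; exact mt0
    · rw [hv1]; exact mt1
  · intro i; cases i
    · rw [hv0]; exact pt0
    · rw [hv1]; exact pt1
  · intro i; cases i
    · rw [hR0, hv0]; exact hS0sub
    · rw [hR1, hv1]; exact hS1sub
  · rw [hv0, hv1]; exact it0
  · rw [hv0, hv1]; exact it1
  · rw [hh]; exact ma1
  · rw [hh]; exact pa1
  · intro i; cases i
    · rw [hh, hv0]; exact i01
    · rw [hh, hv1]; exact i11
  · intro i; cases i
    · rw [hh, hv0]; exact i02
    · rw [hh, hv1]; exact i12

lemma fR_cons_subset (hF : FHyp P c) (hRt : Rt ∈ P (c 0)) (i : Bool) (p : List Bool) :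
    fR P c Rt (i::p) ⊆ fR P c Rt p :=
  ((fusion_cons_spec hF hRt p).2.2.1 i).trans (Tres_subset _ _)

lemma fR_append_subset (hF : FHyp P c) (hRt : Rt ∈ P (c 0)) (q p : List Bool) :
    fR P c Rt (q ++ p) ⊆ fR P c Rt p := by
  induction q with
  | nil => simp
  | cons i q ih => exact (fR_cons_subset hF hRt i (q ++ p)).trans ih

lemma fv_append_prefix (hF : FHyp P c) (hRt : Rt ∈ P (c 0)) (q p : List Bool) :
    fv P c Rt p <+: fv P c Rt (q ++ p) := by
  induction q with
  | nil => simp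
  | cons i q ih => exact ih.trans ((fusion_cons_spec hF hRt (q ++ p)).2.1 i)

lemma fv_level_incomp (hF : FHyp P c) (hRt : Rt ∈ P (c 0)) :
    ∀ p p' : List Bool, p.length = p'.length → p ≠ p' →
      ¬ fv P c Rt p <+: fv P c Rt p' ∧ ¬ fv P c Rt p' <+: fv P c Rt p := by
  intro p
  induction p with
  | nil =>
    intro p' hl hne
    cases p' with
    | nil => exact absurd rfl hne
    | cons i q => simp at hl
  | cons i p ih =>
    intro p' hl hne
    cases p' with
    | nil => simp at hl
    | cons i' q =>
      have hlq : p.length = q.length := by simpa using hl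
      by_cases hpq : p = q
      · subst hpq
        have hii : i ≠ i' := by
          intro hii; exact hne (by rw [hii])
        obtain ⟨_, _, _, s1, s2, _⟩ := fusion_cons_spec hF hRt p
        cases i
        · cases i'
          · exact absurd rfl hii
          · exact ⟨s1, s2⟩
        · cases i'
          · exact ⟨s2, s1⟩
          · exact absurd rfl hii
      · obtain ⟨ih1, ih2⟩ := ih q hlq hpq
        have hp1 : fv P c Rt p <+: fv P c Rt (i::p) := (fusion_cons_spec hF hRt p).2.1 i
        have hp2 : fv P c Rt q <+: fv P c Rt (i'::q) := (fusion_cons_spec hF hRt q).2.1 i'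
        constructor
        · intro hcon
          rcases prefix_comparable (hp1.trans hcon) hp2 with h2 | h2
          · exact ih1 h2
          · exact ih2 h2
        · intro hcon
          rcases prefix_comparable (hp2.trans hcon) hp1 with h2 | h2
          · exact ih2 h2
          · exact ih1 h2

end Fusion

def Cfus (P : Ordinal → Set (Set Str)) (c : ℕ → Ordinal) (Rt : Set Str) : Set Pt :=
  ⋂ n, ⋃ p ∈ {q : List Bool | q.length = n}, branches (fR P c Rt p)

def Sfus (P : Ordinal → Set (Set Str)) (c : ℕ → Ordinal) (Rt : Set Str) : Set Str :=
  {s | ∃ x ∈ Cfus P c Rt, seg x s.length = s}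

section Fusion2

variable {P : Ordinal → Set (Set Str)} {c : ℕ → Ordinal} {Rt : Set Str}

lemma mem_Cfus_level {x : Pt} (hx : x ∈ Cfus P c Rt) (n : ℕ) :
    ∃ p : List Bool, p.length = n ∧ x ∈ branches (fR P c Rt p) := by
  have := Set.mem_iInter.1 hx n
  simpa using this

lemma cone_unique (hF : FHyp P c) (hRt : Rt ∈ P (c 0)) {x : Pt} {p p' : List Bool}
    (hp : x ∈ branches (fR P c Rt p)) (hp' : x ∈ branches (fR P c Rt p'))
    (hl : p.length = p'.length) : p = p' := by
  by_contra hne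
  have h1 : x ∈ Ns (fv P c Rt p) := (fusion_inv hF hRt p).2.2.2 hp
  have h2 : x ∈ Ns (fv P c Rt p') := (fusion_inv hF hRt p').2.2.2 hp'
  rcases comparable_of_mem_Ns h1 h2 with h3 | h3
  · exact (fv_level_incomp hF hRt p p' hl hne).1 h3
  · exact (fv_level_incomp hF hRt p p' hl hne).2 h3

lemma Cfus_inter_Ns (hF : FHyp P c) (hRt : Rt ∈ P (c 0)) (p : List Bool) :
    Cfus P c Rt ∩ Ns (fv P c Rt p) ⊆ branches (fR P c Rt p) := by
  rintro x ⟨hx, hNs⟩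
  obtain ⟨p', hl, hp'⟩ := mem_Cfus_level hx p.length
  have h2 : x ∈ Ns (fv P c Rt p') := (fusion_inv hF hRt p').2.2.2 hp'
  have hpp : p' = p := by
    by_contra hne
    rcases comparable_of_mem_Ns h2 hNs with h3 | h3
    · exact (fv_level_incomp hF hRt p' p hl hne).1 h3
    · exact (fv_level_incomp hF hRt p' p hl hne).2 h3
  rwa [hpp] at hp'


lemma fR_nil : fR P c Rt [] = Rt := rfl

lemma fR_perfect (hF : FHyp P c) (hRt : Rt ∈ P (c 0)) (p : List Bool) :
    IsPerfectTree (fR P c Rt p) :=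
  (hF p.length).1 _ (fusion_inv hF hRt p).1

lemma exists_infinite_fiber_of_finite {α : Type*} (f : ℕ → α) {S : Set α} (hS : S.Finite)
    (hf : ∀ n, f n ∈ S) : ∃ a, {n | f n = a}.Infinite := by
  by_contra hcon
  push_neg at hcon
  have hsub : (Set.univ : Set ℕ) ⊆ ⋃ a ∈ S, {n | f n = a} :=
    fun n _ => Set.mem_biUnion (hf n) rfl
  exact Set.infinite_univ (Set.Finite.subset (hS.biUnion (fun a _ => hcon a)) hsub)

lemma branch_through (hF : FHyp P c) (hRt : Rt ∈ P (c 0)) (p : List Bool) :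
    ∃ x, x ∈ Cfus P c Rt ∧ x ∈ branches (fR P c Rt p) := by
  classical
  set d : ℕ → List Bool := fun m => List.replicate m false ++ p with hd
  have hdlen : ∀ m, (d m).length = m + p.length := by
    intro m; simp [hd]
  have hdapp : ∀ m m', m ≤ m' → d m' = List.replicate (m' - m) false ++ d m := by
    intro m m' hmm
    simp only [hd]
    rw [← List.append_assoc, ← List.replicate_add]
    congr 2
    omega
  set vch : ℕ → Str := fun m => fv P c Rt (d m) with hvch
  have hvlen : ∀ m, m ≤ (vch m).length := by
    intro m
    have h1 := (fusion_inv hF hRt (d m)).2.2.1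
    have := hdlen m
    simp only [hvch]
    omega
  have hvpref : ∀ m m', m ≤ m' → vch m <+: vch m' := by
    intro m m' hmm
    simp only [hvch]
    rw [hdapp m m' hmm]
    exact fv_append_prefix hF hRt _ _
  set x : Pt := chainLim vch with hx
  have hxseg : ∀ n m, n ≤ m → seg x n = (vch m).take n := by
    intro n m hnm
    exact seg_chainLim vch hvlen hvpref n m hnm
  have hxbr : ∀ m, x ∈ branches (fR P c Rt (d m)) := by
    intro m n
    set M := max n m with hM
    have h1 : seg x n = (vch M).take n := hxseg n M (le_max_left _ _)
    have h2 : (vch M).take n <+: vch M := List.take_prefix _ _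
    have h3 : vch M ∈ fR P c Rt (d M) := (fusion_inv hF hRt (d M)).2.1
    have h4 : fR P c Rt (d M) ⊆ fR P c Rt (d m) := by
      rw [hdapp m M (le_max_right _ _)]
      exact fR_append_subset hF hRt _ _
    have htree : IsTree (fR P c Rt (d m)) := (fR_perfect hF hRt (d m)).2.1
    rw [h1]
    exact htree h2 (h4 h3)
  refine ⟨x, ?_, ?_⟩
  · rw [Cfus, Set.mem_iInter]
    intro n
    rcases Nat.le_total p.length n with h1 | h1
    · refine Set.mem_biUnion (show (d (n - p.length)).length = n by rw [hdlen]; omega) ?_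
      exact hxbr (n - p.length)
    · set q := p.drop (p.length - n) with hq
      have hql : q.length = n := by simp [hq]; omega
      have hsub : fR P c Rt p ⊆ fR P c Rt q := by
        have : p = p.take (p.length - n) ++ q := (List.take_append_drop _ _).symm
        nth_rewrite 1 [this]
        exact fR_append_subset hF hRt _ _
      refine Set.mem_biUnion hql ?_
      have := hxbr 0
      simp only [hd, List.replicate, List.nil_append] at this
      exact branches_mono hsub this
  · have := hxbr 0
    simpa [hd] using this

lemma mem_Sfus_iff {s : Str} : s ∈ Sfus P c Rt ↔ ∃ x ∈ Cfus P c Rt, x ∈ Ns s := Iff.rfl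

lemma branches_Sfus (hF : FHyp P c) (hRt : Rt ∈ P (c 0)) :
    branches (Sfus P c Rt) = Cfus P c Rt := by
  apply Set.Subset.antisymm
  · intro x hxb
    rw [Cfus, Set.mem_iInter]
    intro n
    have Hj : ∀ j : ℕ, ∃ p : List Bool, p.length = n ∧ ∃ y ∈ Cfus P c Rt,
        y ∈ branches (fR P c Rt p) ∧ seg y j = seg x j := by
      intro j
      obtain ⟨y, hy, hyseg⟩ := hxb j
      obtain ⟨p, hpl, hpy⟩ := mem_Cfus_level hy n
      have : seg y j = seg x j := by
        rw [show (seg x j).length = j from by simp] at hyseg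
        exact hyseg
      exact ⟨p, hpl, y, hy, hpy, this⟩
    choose pf hpf1 yf hyf1 hyf2 hyf3 using Hj
    obtain ⟨p, hpinf⟩ := exists_infinite_fiber_of_finite pf
      (List.finite_length_eq Bool n) (fun j => hpf1 j)
    have hxp : x ∈ branches (fR P c Rt p) := by
      intro j
      obtain ⟨j', hj'mem, hj'ge⟩ := hpinf.exists_gt j
      have h1 : seg x j <+: seg x j' := seg_prefix x (le_of_lt hj'ge)
      have h2 : seg x j' = seg (yf j') j' := (hyf3 j').symm
      have h3 : seg (yf j') j' ∈ fR P c Rt (pf j') := hyf2 j' j'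
      rw [hj'mem] at h3
      have htree : IsTree (fR P c Rt p) := (fR_perfect hF hRt p).2.1
      exact htree (h2 ▸ h1) h3
    exact Set.mem_biUnion (show p.length = n from by
      obtain ⟨j0, hj0, _⟩ := hpinf.exists_gt 0
      rw [← hj0]; exact hpf1 j0) hxp
  · intro x hx n
    exact ⟨x, hx, by simp⟩

lemma Sfus_tree : IsTree (Sfus P c Rt) := by
  rintro u t hut ⟨y, hy, hyt⟩
  refine ⟨y, hy, ?_⟩
  have h1 : u <+: seg y t.length := by rw [hyt]; exact hut
  exact (eq_seg_of_prefix_seg h1).symm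

lemma Sfus_level (hF : FHyp P c) (hRt : Rt ∈ P (c 0)) {s : Str} (hs : s ∈ Sfus P c Rt)
    (n : ℕ) : ∃ p : List Bool, p.length = n ∧ s ∈ fR P c Rt p ∧
      ((fv P c Rt p).length ≤ s.length → fv P c Rt p <+: s) ∧
      ∃ x ∈ Cfus P c Rt, x ∈ Ns s ∧ x ∈ Ns (fv P c Rt p) := by
  obtain ⟨x, hx, hxs⟩ := hs
  obtain ⟨p, hpl, hpx⟩ := mem_Cfus_level hx n
  have hfvNs : x ∈ Ns (fv P c Rt p) := (fusion_inv hF hRt p).2.2.2 hpx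
  refine ⟨p, hpl, ?_, ?_, x, hx, hxs, hfvNs⟩
  · rw [← hxs]; exact hpx s.length
  · intro hle
    rw [← hxs, ← hfvNs]
    exact seg_prefix x hle

lemma Sfus_subset_Rt (hF : FHyp P c) (hRt : Rt ∈ P (c 0)) : Sfus P c Rt ⊆ Rt := by
  intro s hs
  obtain ⟨p, hpl, hsp, _, _⟩ := Sfus_level hF hRt hs 0
  have : p = [] := List.length_eq_zero_iff.1 hpl
  rwa [this, fR_nil] at hsp

lemma Sfus_nonempty (hF : FHyp P c) (hRt : Rt ∈ P (c 0)) : (Sfus P c Rt).Nonempty := by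
  obtain ⟨x, hx, _⟩ := branch_through hF hRt []
  exact ⟨seg x 0, x, hx, by simp⟩

lemma Sfus_perfect (hF : FHyp P c) (hRt : Rt ∈ P (c 0)) : IsPerfectTree (Sfus P c Rt) := by
  refine ⟨Sfus_nonempty hF hRt, Sfus_tree, ?_⟩
  intro s hs
  obtain ⟨p, hpl, hsp, hfvp, x, hx, hxNs, hxfv⟩ := Sfus_level hF hRt hs s.length
  have hlen : s.length ≤ (fv P c Rt p).length := by
    have := (fusion_inv hF hRt p).2.2.1
    omega
  have hsfv : s <+: fv P c Rt p := by
    rw [← hxNs, ← hxfv]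
    exact seg_prefix x hlen
  obtain ⟨y₀, hy₀C, hy₀⟩ := branch_through hF hRt (false :: p)
  obtain ⟨y₁, hy₁C, hy₁⟩ := branch_through hF hRt (true :: p)
  have hy₀Ns : y₀ ∈ Ns (fv P c Rt (false :: p)) := (fusion_inv hF hRt _).2.2.2 hy₀
  have hy₁Ns : y₁ ∈ Ns (fv P c Rt (true :: p)) := (fusion_inv hF hRt _).2.2.2 hy₁
  set M := max (fv P c Rt (false :: p)).length (fv P c Rt (true :: p)).length with hM
  refine ⟨seg y₀ M, seg y₁ M, ⟨y₀, hy₀C, by simp⟩, ⟨y₁, hy₁C, by simp⟩, ?_, ?_, ?_, ?_⟩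
  · calc s <+: fv P c Rt p := hsfv
      _ <+: fv P c Rt (false :: p) := (fusion_cons_spec hF hRt p).2.1 false
      _ <+: seg y₀ M := prefix_seg_of_mem_Ns hy₀Ns (le_max_left _ _)
  · calc s <+: fv P c Rt p := hsfv
      _ <+: fv P c Rt (true :: p) := (fusion_cons_spec hF hRt p).2.1 true
      _ <+: seg y₁ M := prefix_seg_of_mem_Ns hy₁Ns (le_max_right _ _)
  · intro hcon
    have he : seg y₀ M = seg y₁ M := hcon.eq_of_length (by simp)
    have h0 : fv P c Rt (false :: p) <+: seg y₁ M := by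
      rw [← he]; exact prefix_seg_of_mem_Ns hy₀Ns (le_max_left _ _)
    have h1 : fv P c Rt (true :: p) <+: seg y₁ M :=
      prefix_seg_of_mem_Ns hy₁Ns (le_max_right _ _)
    rcases prefix_comparable h0 h1 with h2 | h2
    · exact (fusion_cons_spec hF hRt p).2.2.2.1 h2
    · exact (fusion_cons_spec hF hRt p).2.2.2.2.1 h2
  · intro hcon
    have he : seg y₁ M = seg y₀ M := hcon.eq_of_length (by simp)
    have h0 : fv P c Rt (false :: p) <+: seg y₀ M :=
      prefix_seg_of_mem_Ns hy₀Ns (le_max_left _ _)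
    have h1 : fv P c Rt (true :: p) <+: seg y₀ M := by
      rw [← he]; exact prefix_seg_of_mem_Ns hy₁Ns (le_max_right _ _)
    rcases prefix_comparable h0 h1 with h2 | h2
    · exact (fusion_cons_spec hF hRt p).2.2.2.1 h2
    · exact (fusion_cons_spec hF hRt p).2.2.2.2.1 h2

lemma fusion_hole (hF : FHyp P c) (hRt : Rt ∈ P (c 0)) {x : Pt} (hx : x ∈ Cfus P c Rt)
    (m : ℕ) : ∃ p : List Bool, p.length = m ∧ x ∈ Ns (fv P c Rt p) ∧
      m ≤ (fv P c Rt p).length ∧ fhole P c Rt p ∈ fR P c Rt p ∧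
      fv P c Rt p <+: fhole P c Rt p ∧ Cfus P c Rt ∩ Ns (fhole P c Rt p) = ∅ := by
  obtain ⟨p, hpl, hpx⟩ := mem_Cfus_level hx m
  have hfvNs : x ∈ Ns (fv P c Rt p) := (fusion_inv hF hRt p).2.2.2 hpx
  have hlen : m ≤ (fv P c Rt p).length := by
    have := (fusion_inv hF hRt p).2.2.1; omega
  obtain ⟨_, _, _, _, _, hhm, hhp, hhi1, hhi2⟩ := fusion_cons_spec hF hRt p
  refine ⟨p, hpl, hfvNs, hlen, hhm, hhp, ?_⟩
  ext y
  simp only [Set.mem_inter_iff, Set.mem_empty_iff_false, iff_false, not_and]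
  intro hyC hyh
  obtain ⟨p', hp'l, hp'y⟩ := mem_Cfus_level hyC (m + 1)
  have hyNs' : y ∈ Ns (fv P c Rt p') := (fusion_inv hF hRt p').2.2.2 hp'y
  cases p' with
  | nil => simp at hp'l
  | cons i q =>
    have hql : q.length = m := by simpa using hp'l
    have hyq : y ∈ Ns (fv P c Rt q) :=
      Ns_mono ((fusion_cons_spec hF hRt q).2.1 i) hyNs'
    have hyp : y ∈ Ns (fv P c Rt p) := Ns_mono hhp hyh
    have hqp : q = p := by
      by_contra hne
      rcases comparable_of_mem_Ns hyq hyp with h2 | h2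
      · exact (fv_level_incomp hF hRt q p (by omega) hne).1 h2
      · exact (fv_level_incomp hF hRt q p (by omega) hne).2 h2
    subst hqp
    rcases comparable_of_mem_Ns hyh hyNs' with h2 | h2
    · exact hhi1 i h2
    · exact hhi2 i h2

lemma FHyp_of {l : Ordinal} (hc1 : ∀ n, c n < l) (hc2 : ∀ n, c n ≤ c (n+1))
    (h : ∀ a < l, IsPTF (P a) ∧ (P a).Countable ∧ SpecialPTF (P a))
    (hinc : ∀ a b : Ordinal, a < b → b < l → Refines (P a) (P b)) : FHyp P c := by
  intro n
  refine ⟨(h (c n) (hc1 n)).1.2.1, (h (c n) (hc1 n)).1.2.2, ?_⟩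
  intro T hT
  rcases lt_or_eq_of_le (hc2 n) with h1 | h1
  · exact (hinc (c n) (c (n+1)) h1 (hc1 (n+1))).1 T hT
  · exact ⟨T, h1 ▸ hT, subset_rfl⟩

lemma fusion_sqfin (hF : FHyp P c) (hRt : Rt ∈ P (c 0)) {l : Ordinal}
    (hc1 : ∀ n, c n < l)
    (hinc : ∀ a b : Ordinal, a < b → b < l → Refines (P a) (P b))
    {a' : Ordinal} (ha' : a' < l) {n : ℕ} (hn : a' ≤ c n) :
    SqFin (Sfus P c Rt) (P a') := by
  apply sqfin_of_cover (F := (fun p => fR P c Rt p) '' {q : List Bool | q.length = n})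
    ((List.finite_length_eq Bool n).image _)
  · intro x hx
    rw [branches_Sfus hF hRt] at hx
    obtain ⟨p, hpl, hpx⟩ := mem_Cfus_level hx n
    exact Set.mem_biUnion ⟨p, hpl, rfl⟩ hpx
  · rintro R ⟨p, hpl, rfl⟩
    have hmem : fR P c Rt p ∈ P (c n) := by
      have := (fusion_inv hF hRt p).1
      rwa [hpl] at this
    rcases lt_or_eq_of_le hn with h1 | h1
    · exact (hinc a' (c n) h1 (hc1 n)).2.1 _ hmem
    · exact sqfin_self (h1 ▸ hmem)

lemma fusion_clopen (hF : FHyp P c) (hRt : Rt ∈ P (c 0)) {l : Ordinal}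
    (hc1 : ∀ n, c n < l)
    (h : ∀ a < l, IsPTF (P a) ∧ (P a).Countable ∧ SpecialPTF (P a))
    (hinc : ∀ a b : Ordinal, a < b → b < l → Refines (P a) (P b))
    {a' : Ordinal} (ha' : a' < l) {n : ℕ} (hn : a' ≤ c n)
    {T' : Set Str} (hT' : T' ∈ P a') :
    ClopenIn (branches (Sfus P c Rt) ∩ branches T') (branches (Sfus P c Rt)) := by
  rw [branches_Sfus hF hRt]
  have hpiece : ∀ p : List Bool, p.length = n →
      ClopenIn (Cfus P c Rt ∩ branches (fR P c Rt p) ∩ branches T') (Cfus P c Rt) := by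
    intro p hpl
    have hmem : fR P c Rt p ∈ P (c n) := by
      have := (fusion_inv hF hRt p).1
      rwa [hpl] at this
    have hA : ClopenIn (branches (fR P c Rt p) ∩ branches T') (branches (fR P c Rt p)) := by
      rcases lt_or_eq_of_le hn with h1 | h1
      · exact ((hinc a' (c n) h1 (hc1 n)).2.2 _ hmem T' hT').1
      · exact special_clopen (h (c n) (hc1 n)).2.2 hmem (h1 ▸ hT')
    have hBsub : Cfus P c Rt ∩ branches (fR P c Rt p) ⊆ branches (fR P c Rt p) :=
      Set.inter_subset_right
    have hC := clopenIn_mono hA hBsub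
    have hC' : ClopenIn (Cfus P c Rt ∩ branches (fR P c Rt p) ∩ branches T')
        (Cfus P c Rt ∩ branches (fR P c Rt p)) := by
      apply clopenIn_congr (A := branches (fR P c Rt p) ∩ branches T' ∩
        (Cfus P c Rt ∩ branches (fR P c Rt p)))
      · ext x
        simp only [Set.mem_inter_iff]
        tauto
      · exact hC
    have hD : ClopenIn (Cfus P c Rt ∩ branches (fR P c Rt p)) (Cfus P c Rt) := by
      apply clopenIn_congr (A := Ns (fv P c Rt p))
      · ext x
        simp only [Set.mem_inter_iff]
        constructor
        · rintro ⟨h1, h2⟩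
          exact ⟨⟨h2, Cfus_inter_Ns hF hRt p ⟨h2, h1⟩⟩, h2⟩
        · rintro ⟨⟨h1, h2⟩, h3⟩
          exact ⟨(fusion_inv hF hRt p).2.2.2 h2, h3⟩
      · exact clopenIn_of_clopen (isClopen_Ns _) _
    exact clopenIn_trans Set.inter_subset_left Set.inter_subset_left hC' hD
  have hU : ClopenIn (⋃ p ∈ {q : List Bool | q.length = n},
      (Cfus P c Rt ∩ branches (fR P c Rt p) ∩ branches T')) (Cfus P c Rt) :=
    clopenIn_biUnion (List.finite_length_eq Bool n) (fun p hp => hpiece p hp)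
  apply clopenIn_congr (A := ⋃ p ∈ {q : List Bool | q.length = n},
      (Cfus P c Rt ∩ branches (fR P c Rt p) ∩ branches T'))
  · ext x
    simp only [Set.mem_inter_iff, Set.mem_iUnion, Set.mem_setOf_eq]
    constructor
    · rintro ⟨⟨p, hpl, ⟨⟨h1, _⟩, h2⟩⟩, h3⟩
      exact ⟨⟨h1, h2⟩, h3⟩
    · rintro ⟨⟨h1, h2⟩, h3⟩
      obtain ⟨p, hpl, hpx⟩ := mem_Cfus_level h1 n
      exact ⟨⟨p, hpl, ⟨⟨h1, hpx⟩, h2⟩⟩, h3⟩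
  · exact hU

lemma fusion_notsub (hF : FHyp P c) (hRt : Rt ∈ P (c 0)) {l : Ordinal}
    (hc1 : ∀ n, c n < l) (hcle : ∀ m n : ℕ, m ≤ n → c m ≤ c n)
    (h : ∀ a < l, IsPTF (P a) ∧ (P a).Countable ∧ SpecialPTF (P a))
    (hinc : ∀ a b : Ordinal, a < b → b < l → Refines (P a) (P b))
    (hc3 : ∀ a' < l, ∃ n, a' ≤ c n)
    {a' : Ordinal} (ha' : a' < l) {T' : Set Str} (hT' : T' ∈ P a') :
    ¬ T' ⊆ Sfus P c Rt := by
  intro hTS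
  have hsubgen : ∀ (T₀ : Set Str) (u : Str), u ∈ T₀ →
      (∀ w ∈ T₀, u <+: w → w ∈ Sfus P c Rt) → ∀ p : List Bool,
      (∃ x ∈ Cfus P c Rt, x ∈ Ns (fv P c Rt p)) →
      u <+: fv P c Rt p → IsTree T₀ → Tres T₀ (fv P c Rt p) ⊆ fR P c Rt p := by
    intro T₀ u hu hcone p hxp hufv htree
    rintro w ⟨hwT₀, hw2⟩
    rcases hw2 with h1 | h1
    · obtain ⟨x'', hx''C, hx''Ns⟩ := hcone w hwT₀ (hufv.trans h1)
      have hx''fv : x'' ∈ Ns (fv P c Rt p) := Ns_mono h1 hx''Ns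
      have hbr := Cfus_inter_Ns hF hRt p ⟨hx''C, hx''fv⟩
      have := hbr w.length
      rwa [hx''Ns] at this
    · exact (fR_perfect hF hRt p).2.1 h1 (fusion_inv hF hRt p).2.1
  by_cases hex : ∃ m, a' < c m
  · obtain ⟨m, hm⟩ := hex
    have hperfT : IsPerfectTree T' := (h a' ha').1.2.1 T' hT'
    obtain ⟨x, hxb, _⟩ := hperfT.exists_branch hperfT.nil_mem
    have hxC : x ∈ Cfus P c Rt := by
      rw [← branches_Sfus hF hRt]
      exact branches_mono hTS hxb
    obtain ⟨p, hpl, hpx⟩ := mem_Cfus_level hxC m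
    have hfvNs : x ∈ Ns (fv P c Rt p) := (fusion_inv hF hRt p).2.2.2 hpx
    have hfvT : fv P c Rt p ∈ T' := by
      have := hxb (fv P c Rt p).length
      rwa [hfvNs] at this
    have hsub : Tres T' (fv P c Rt p) ⊆ fR P c Rt p := by
      apply hsubgen T' (fv P c Rt p) hfvT
        (fun w hw _ => hTS hw) p ⟨x, hxC, hfvNs⟩ (List.prefix_refl _) hperfT.2.1
    have hTresmem : Tres T' (fv P c Rt p) ∈ P a' := (h a' ha').1.2.2 T' hT' _ hfvT
    have hfRmem : fR P c Rt p ∈ P (c m) := by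
      have := (fusion_inv hF hRt p).1
      rwa [hpl] at this
    exact ((hinc a' (c m) hm (hc1 m)).2.2 _ hfRmem _ hTresmem).2 hsub
  · push_neg at hex
    obtain ⟨n, hn⟩ := hc3 a' ha'
    obtain ⟨A, hA, hpair, hPeq⟩ := (h a' ha').2.2
    obtain ⟨T₀, hT₀, sQ, hsmem, rfl⟩ := special_decomp hPeq hT'
    have hperfT₀ : IsPerfectTree T₀ := (h a' ha').1.2.1 T₀ (hA hT₀)
    have hperfT' : IsPerfectTree (Tres T₀ sQ) := hperfT₀.Tres hsmem
    obtain ⟨t, htT, hst, hlt⟩ := hperfT'.exists_longer (mem_Tres_self hsmem) (sQ.length + 1)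
    have hst' : sQ <+: t := by
      rcases htT.2 with h1 | h1
      · exact h1
      · exact absurd h1.length_le (by omega)
    have hTresEq : Tres (Tres T₀ sQ) t = Tres T₀ t := Tres_Tres_of_prefix hst'
    have hTresSub : Tres T₀ t ⊆ Sfus P c Rt := by
      rw [← hTresEq]
      exact (Tres_subset _ _).trans hTS
    obtain ⟨x, hxb, hxNs⟩ := hperfT₀.exists_branch htT.1
    have hxC : x ∈ Cfus P c Rt := by
      rw [← branches_Sfus hF hRt]
      apply branches_mono hTresSub
      rw [branches_Tres]
      exact ⟨hxb, hxNs⟩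
    obtain ⟨p, hpl, hxfv, hmlen, hholem, hholep, hempty⟩ :=
      fusion_hole hF hRt hxC (max n t.length)
    have htfv : t <+: fv P c Rt p := by
      rw [← hxNs, ← hxfv]
      exact seg_prefix x (le_trans (le_max_right _ _) hmlen)
    have hfvT₀ : fv P c Rt p ∈ T₀ := by
      have := hxb (fv P c Rt p).length
      rwa [hxfv] at this
    have hcone : ∀ w ∈ T₀, t <+: w → w ∈ Sfus P c Rt :=
      fun w hw hp => hTresSub ⟨hw, Or.inl hp⟩
    have hsubp : Tres T₀ (fv P c Rt p) ⊆ fR P c Rt p :=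
      hsubgen T₀ t htT.1 hcone p ⟨x, hxC, hxfv⟩ htfv hperfT₀.2.1
    have hcm : c (max n t.length) = a' := by
      apply le_antisymm (hex _)
      exact le_trans hn (hcle n _ (le_max_left _ _))
    have hfRmem : fR P c Rt p ∈ P a' := by
      have := (fusion_inv hF hRt p).1
      rw [hpl, hcm] at this
      exact this
    obtain ⟨R₀, hR₀, s', hs', hfReq⟩ := special_decomp hPeq hfRmem
    have hinf : (Tres T₀ (fv P c Rt p)).Infinite := (hperfT₀.Tres hfvT₀).infinite
    have hT₀R₀ : T₀ = R₀ := by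
      by_contra hne
      apply hinf.mono ?_ (hpair hT₀ hR₀ hne)
      intro w hw
      refine ⟨Tres_subset _ _ hw, ?_⟩
      have := hsubp hw
      rw [hfReq] at this
      exact this.1
    have ha₁T₀ : fhole P c Rt p ∈ T₀ := by
      have := hholem
      rw [hfReq] at this
      rw [hT₀R₀]
      exact this.1
    have ha₁Sfus : fhole P c Rt p ∈ Sfus P c Rt :=
      hcone _ ha₁T₀ (htfv.trans hholep)
    obtain ⟨x', hx'C, hx'Ns⟩ := ha₁Sfus
    have : x' ∈ Cfus P c Rt ∩ Ns (fhole P c Rt p) := ⟨hx'C, hx'Ns⟩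
    rw [hempty] at this
    exact this

lemma Cfus_subset_branches_Rt : Cfus P c Rt ⊆ branches Rt := by
  intro x hx
  obtain ⟨p, hpl, hpx⟩ := mem_Cfus_level hx 0
  have hp : p = [] := List.length_eq_zero_iff.1 hpl
  rw [hp, fR_nil] at hpx
  exact hpx

end Fusion2

/-- The goodness package for generators of `Q`. -/
def GoodS (P : Ordinal → Set (Set Str)) (l : Ordinal) (S : Set Str) : Prop :=
  IsPerfectTree S ∧ (∀ a' < l, SqFin S (P a')) ∧
  (∀ a' < l, ∀ T' ∈ P a', ClopenIn (branches S ∩ branches T') (branches S) ∧ ¬ T' ⊆ S)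

lemma avoid_list {P : Ordinal → Set (Set Str)} {l : Ordinal}
    (h : ∀ a < l, IsPTF (P a) ∧ (P a).Countable ∧ SpecialPTF (P a))
    {a : Ordinal} (ha : a < l) :
    ∀ (L : List (Set Str)), (∀ S' ∈ L, ∀ a'' < l, ∀ T'' ∈ P a'', ¬ T'' ⊆ S') →
    ∀ {T : Set Str}, T ∈ P a →
    ∃ t ∈ T, ∀ S' ∈ L, branches (Tres T t) ∩ branches S' = ∅ := by
  intro L
  induction L with
  | nil =>
    intro _ T hT
    exact ⟨[], ((h a ha).1.2.1 T hT).nil_mem, fun S' hS' => absurd hS' List.not_mem_nil⟩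
  | cons S' L' ih =>
    intro hL T hT
    obtain ⟨t₁, ht₁, hdisj⟩ := ih (fun S hS => hL S (List.mem_cons_of_mem _ hS)) hT
    set T₁ := Tres T t₁ with hT₁def
    have hT₁mem : T₁ ∈ P a := (h a ha).1.2.2 T hT t₁ ht₁
    have hT₁perf : IsPerfectTree T₁ := (h a ha).1.2.1 T₁ hT₁mem
    have hnot : ¬ T₁ ⊆ S' := hL S' List.mem_cons_self a ha T₁ hT₁mem
    obtain ⟨w, hwT₁, hwS'⟩ := Set.not_subset.1 hnot
    obtain ⟨x, hxb, hxNs⟩ := hT₁perf.exists_branch hwT₁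
    set M := max w.length t₁.length with hM
    set t := seg x M with ht
    have htT₁ : t ∈ T₁ := hxb M
    have ht₁t : t₁ <+: t := by
      have : x ∈ Ns t₁ := by
        rw [hT₁def, branches_Tres] at hxb
        exact hxb.2
      rw [← this, ht]
      exact seg_prefix x (le_max_right _ _)
    have hwt : w <+: t := by
      rw [← hxNs, ht]
      exact seg_prefix x (le_max_left _ _)
    refine ⟨t, Tres_subset _ _ htT₁, ?_⟩
    intro S'' hS''
    rcases List.mem_cons.1 hS'' with rfl | hS''
    · ext y
      simp only [Set.mem_inter_iff, Set.mem_empty_iff_false, iff_false, not_and]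
      intro hy1 hy2
      have hyNs : y ∈ Ns t := by
        rw [branches_Tres] at hy1
        exact hy1.2
      have hwseg : w = seg y w.length :=
        eq_seg_of_prefix_seg (hwt.trans (prefix_seg_of_mem_Ns hyNs le_rfl))
      exact hwS' (by rw [hwseg]; exact hy2 w.length)
    · have hsub : branches (Tres T t) ⊆ branches (Tres T t₁) := by
        rw [branches_Tres, branches_Tres]
        exact Set.inter_subset_inter_right _ (Ns_mono ht₁t)
      have := hdisj S'' hS''
      apply Set.eq_empty_of_subset_empty
      rw [← this]
      exact Set.inter_subset_inter_left _ hsub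

lemma main_ex {P : Ordinal → Set (Set Str)} {l : Ordinal}
    (h : ∀ a < l, IsPTF (P a) ∧ (P a).Countable ∧ SpecialPTF (P a))
    (hinc : ∀ a b : Ordinal, a < b → b < l → Refines (P a) (P b))
    (b : ℕ → Ordinal) (hb1 : ∀ n, b n < l) (hb2 : ∀ m n : ℕ, m ≤ n → b m ≤ b n)
    (hb3 : ∀ a < l, ∃ n, a ≤ b n) :
    ∀ (T : Set Str) (L : List (Set Str)), ∃ S : Set Str,
      (∃ a < l, T ∈ P a) → (∀ S' ∈ L, ∀ a'' < l, ∀ T'' ∈ P a'', ¬ T'' ⊆ S') →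
      (GoodS P l S ∧ S ⊆ T ∧ ∀ S' ∈ L, branches S ∩ branches S' = ∅) := by
  intro T L
  by_cases hh : (∃ a < l, T ∈ P a) ∧ (∀ S' ∈ L, ∀ a'' < l, ∀ T'' ∈ P a'', ¬ T'' ⊆ S')
  swap
  · refine ⟨∅, fun h1 h2 => absurd ⟨h1, h2⟩ hh⟩
  obtain ⟨⟨a, ha, hT⟩, hL⟩ := hh
  obtain ⟨t, htT, hdisj⟩ := avoid_list h ha L hL hT
  set Tstar := Tres T t with hTstar
  have hTstarmem : Tstar ∈ P a := (h a ha).1.2.2 T hT t htT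
  obtain ⟨n₀, hn₀⟩ := hb3 a ha
  set c : ℕ → Ordinal := fun m => b (n₀ + m) with hc
  have hc1 : ∀ n, c n < l := fun n => hb1 _
  have hc2 : ∀ n, c n ≤ c (n+1) := fun n => hb2 _ _ (by omega)
  have hcle : ∀ m n : ℕ, m ≤ n → c m ≤ c n := fun m n hmn => hb2 _ _ (by omega)
  have hc3 : ∀ a' < l, ∃ n, a' ≤ c n := by
    intro a' ha'
    obtain ⟨n, hn⟩ := hb3 a' ha'
    exact ⟨n, le_trans hn (hb2 n (n₀ + n) (by omega))⟩
  have hF : FHyp P c := FHyp_of hc1 hc2 h hinc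
  have hRt : ∃ Rt : Set Str, Rt ∈ P (c 0) ∧ Rt ⊆ Tstar := by
    rcases lt_or_eq_of_le hn₀ with h1 | h1
    · obtain ⟨Rt, hRt1, hRt2⟩ := (hinc a (b n₀) h1 (hb1 n₀)).1 Tstar hTstarmem
      exact ⟨Rt, by simpa [hc] using hRt1, hRt2⟩
    · exact ⟨Tstar, by simp only [hc, Nat.add_zero]; exact h1 ▸ hTstarmem, subset_rfl⟩
  obtain ⟨Rt, hRtmem, hRtsub⟩ := hRt
  refine ⟨Sfus P c Rt, fun _ _ => ⟨⟨Sfus_perfect hF hRtmem, ?_, ?_⟩, ?_, ?_⟩⟩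
  · intro a' ha'
    obtain ⟨n, hn⟩ := hc3 a' ha'
    exact fusion_sqfin hF hRtmem hc1 hinc ha' hn
  · intro a' ha' T' hT'
    obtain ⟨n, hn⟩ := hc3 a' ha'
    exact ⟨fusion_clopen hF hRtmem hc1 h hinc ha' hn hT',
      fusion_notsub hF hRtmem hc1 hcle h hinc hc3 ha' hT'⟩
  · exact (Sfus_subset_Rt hF hRtmem).trans (hRtsub.trans (Tres_subset _ _))
  · intro S' hS'
    have h1 : branches (Sfus P c Rt) ⊆ branches Tstar := by
      rw [branches_Sfus hF hRtmem]
      exact (Cfus_subset_branches_Rt).trans (branches_mono hRtsub)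
    apply Set.eq_empty_of_subset_empty
    rw [← hdisj S' hS']
    exact Set.inter_subset_inter_left _ h1




lemma PTF_of_generators {A : Set (Set Str)} (hne : A.Nonempty)
    (hperf : ∀ T ∈ A, IsPerfectTree T) :
    IsPTF {R | ∃ T ∈ A, ∃ s ∈ T, R = Tres T s} := by
  refine ⟨?_, ?_, ?_⟩
  · obtain ⟨T, hT⟩ := hne
    exact ⟨Tres T [], T, hT, [], (hperf T hT).nil_mem, rfl⟩
  · rintro R ⟨T, hT, s, hs, rfl⟩
    exact (hperf T hT).Tres hs
  · rintro R ⟨T, hT, s, hs, rfl⟩ u hu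
    rcases hu.2 with h1 | h1
    · rw [Tres_Tres_of_prefix h1]
      exact ⟨T, hT, u, hu.1, rfl⟩
    · rw [Tres_Tres_of_prefix' h1]
      exact ⟨T, hT, s, hs, rfl⟩

lemma generators_subset {A : Set (Set Str)} (hperf : ∀ T ∈ A, IsPerfectTree T) :
    A ⊆ {R | ∃ T ∈ A, ∃ s ∈ T, R = Tres T s} := by
  intro T hT
  exact ⟨T, hT, [], (hperf T hT).nil_mem, (Tres_nil T).symm⟩

lemma AD_of_branches_disjoint {S T : Set Str} (hS : IsTree S) (hT : IsTree T)
    (hd : branches S ∩ branches T = ∅) : AD S T := by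
  rw [AD, ← Set.not_infinite]
  intro hinf
  have htree : IsTree (S ∩ T) := fun u t hut hm => ⟨hS hut hm.1, hT hut hm.2⟩
  obtain ⟨x, hx⟩ := exists_branch_of_infinite htree hinf
  have : x ∈ branches S ∩ branches T := ⟨fun n => (hx n).1, fun n => (hx n).2⟩
  rw [hd] at this
  exact this

lemma univ_perfect : IsPerfectTree (Set.univ : Set Str) := by
  refine ⟨⟨[], trivial⟩, fun _ _ _ _ => trivial, ?_⟩
  intro s _
  refine ⟨s ++ [false], s ++ [true], trivial, trivial, List.prefix_append _ _,
    List.prefix_append _ _, ?_, ?_⟩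
  · intro hcon
    have := hcon.eq_of_length (by simp)
    simp at this
  · intro hcon
    have := hcon.eq_of_length (by simp)
    simp at this


/-- Corollary 3.10 (xistC): a `⊑`-increasing sequence, of countable length,
of countable special perfect-tree forcing notions has a countable special
upper `⊑`-bound. -/
theorem stmt17 (l : Ordinal) (hl : l < (Cardinal.aleph 1).ord)
    (P : Ordinal → Set (Set Str))
    (h : ∀ a < l, IsPTF (P a) ∧ (P a).Countable ∧ SpecialPTF (P a))
    (hinc : ∀ a b : Ordinal, a < b → b < l → Refines (P a) (P b)) :
    ∃ Q : Set (Set Str), IsPTF Q ∧ Q.Countable ∧ SpecialPTF Q ∧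
      ∀ a < l, Refines (P a) Q := by
  classical
  by_cases hl0 : l = 0
  · subst hl0
    have hperf : ∀ T ∈ ({(Set.univ : Set Str)} : Set (Set Str)), IsPerfectTree T := by
      rintro T rfl
      exact univ_perfect
    refine ⟨{R | ∃ T ∈ ({(Set.univ : Set Str)} : Set (Set Str)), ∃ s ∈ T, R = Tres T s},
      PTF_of_generators ⟨_, rfl⟩ hperf, ?_, ?_, ?_⟩
    · apply Set.Countable.mono ?_ (Set.countable_range (fun s : Str => Tres Set.univ s))
      rintro R ⟨T, hT, s, hs, rfl⟩
      rcases hT with rfl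
      exact ⟨s, rfl⟩
    · exact ⟨{Set.univ}, generators_subset hperf, Set.pairwise_singleton _ _, rfl⟩
    · intro a ha
      exact absurd ha not_lt_zero
  -- main case
  have hIio : (Set.Iio l).Countable := by
    rw [Cardinal.countable_iff_lt_aleph_one, Ordinal.mk_Iio_ordinal]
    have h1 : l.card < Cardinal.aleph 1 := Cardinal.lt_ord.mp hl
    have h2 := Cardinal.lift_lt.mpr h1
    simpa using h2
  have hlpos : (0 : Ordinal) < l := pos_iff_ne_zero.2 hl0
  obtain ⟨g, hg⟩ := hIio.exists_eq_range ⟨0, hlpos⟩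
  have hglt : ∀ n, g n < l := by
    intro n
    have : g n ∈ Set.Iio l := by rw [hg]; exact ⟨n, rfl⟩
    exact this
  set b : ℕ → Ordinal := fun n => Nat.rec (g 0) (fun k acc => max acc (g (k+1))) n with hbdef
  have hbsucc : ∀ n, b (n+1) = max (b n) (g (n+1)) := fun n => rfl
  have hb1 : ∀ n, b n < l := by
    intro n
    induction n with
    | zero => exact hglt 0
    | succ n ih => rw [hbsucc]; exact max_lt ih (hglt (n+1))
  have hb2' : ∀ n, b n ≤ b (n+1) := fun n => by rw [hbsucc]; exact le_max_left _ _
  have hb2 : ∀ m n : ℕ, m ≤ n → b m ≤ b n := by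
    intro m n hmn
    induction n with
    | zero => have : m = 0 := by omega
              subst this; exact le_rfl
    | succ n ih =>
      rcases Nat.lt_or_ge m (n+1) with h1 | h1
      · exact le_trans (ih (by omega)) (hb2' n)
      · have : m = n + 1 := by omega
        subst this; exact le_rfl
  have hbg : ∀ n, g n ≤ b n := by
    intro n
    cases n with
    | zero => exact le_rfl
    | succ n => rw [hbsucc]; exact le_max_right _ _
  have hb3 : ∀ a < l, ∃ n, a ≤ b n := by
    intro a ha
    have : a ∈ Set.Iio l := ha
    rw [hg] at this
    obtain ⟨n, rfl⟩ := this
    exact ⟨n, hbg n⟩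
  set X := ⋃ a ∈ Set.Iio l, P a with hX
  have hXc : X.Countable := hIio.biUnion (fun a ha => (h a ha).2.1)
  have hXne : X.Nonempty := by
    obtain ⟨T0, hT0⟩ := (h 0 hlpos).1.1
    exact ⟨T0, Set.mem_biUnion hlpos hT0⟩
  obtain ⟨f, hf⟩ := hXc.exists_eq_range hXne
  have hfX : ∀ k, ∃ a < l, f k ∈ P a := by
    intro k
    have : f k ∈ X := by rw [hf]; exact ⟨k, rfl⟩
    simpa [hX] using this
  choose F hFs using main_ex h hinc b hb1 hb2 hb3
  set acc : ℕ → List (Set Str) := fun n => Nat.rec [] (fun k L => L ++ [F (f k) L]) n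
    with haccdef
  set SS : ℕ → Set Str := fun k => F (f k) (acc k) with hSSdef
  have hacc_succ : ∀ k, acc (k+1) = acc k ++ [SS k] := fun k => rfl
  have hmem_acc : ∀ k S', S' ∈ acc k ↔ ∃ j, j < k ∧ S' = SS j := by
    intro k
    induction k with
    | zero => intro S'; simp [haccdef]
    | succ k ih =>
      intro S'
      rw [hacc_succ, List.mem_append, List.mem_singleton, ih]
      constructor
      · rintro (⟨j, hj, rfl⟩ | rfl)
        · exact ⟨j, by omega, rfl⟩
        · exact ⟨k, by omega, rfl⟩
      · rintro ⟨j, hj, rfl⟩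
        rcases Nat.lt_or_ge j k with h1 | h1
        · exact Or.inl ⟨j, h1, rfl⟩
        · have : j = k := by omega
          subst this
          exact Or.inr rfl
  have hmain : ∀ k, GoodS P l (SS k) ∧ SS k ⊆ f k ∧
      ∀ j < k, branches (SS k) ∩ branches (SS j) = ∅ := by
    intro k
    induction k using Nat.strong_induction_on with
    | _ k ih =>
      have hLgood : ∀ S' ∈ acc k, ∀ a'' < l, ∀ T'' ∈ P a'', ¬ T'' ⊆ S' := by
        intro S' hS'
        obtain ⟨j, hj, rfl⟩ := (hmem_acc k S').1 hS'
        intro a'' ha'' T'' hT''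
        exact ((ih j hj).1.2.2 a'' ha'' T'' hT'').2
      have hpack := hFs (f k) (acc k) (hfX k) hLgood
      refine ⟨hpack.1, hpack.2.1, ?_⟩
      intro j hj
      exact hpack.2.2 (SS j) ((hmem_acc k (SS j)).2 ⟨j, hj, rfl⟩)
  have hSSperf : ∀ k, IsPerfectTree (SS k) := fun k => (hmain k).1.1
  have hdisjall : ∀ j k, j ≠ k → branches (SS j) ∩ branches (SS k) = ∅ := by
    intro j k hne
    rcases Nat.lt_or_ge j k with h1 | h1
    · rw [Set.inter_comm]
      exact (hmain k).2.2 j h1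
    · exact (hmain j).2.2 k (by omega)
  have hQAperf : ∀ T ∈ Set.range SS, IsPerfectTree T := by
    rintro T ⟨k, rfl⟩
    exact hSSperf k
  refine ⟨{R | ∃ T ∈ Set.range SS, ∃ s ∈ T, R = Tres T s},
    PTF_of_generators ⟨SS 0, 0, rfl⟩ hQAperf, ?_, ?_, ?_⟩
  · apply Set.Countable.mono ?_
      (Set.countable_range (fun q : ℕ × Str => Tres (SS q.1) q.2))
    rintro R ⟨T, ⟨k, rfl⟩, s, hs, rfl⟩
    exact ⟨(k, s), rfl⟩
  · refine ⟨Set.range SS, generators_subset hQAperf, ?_, rfl⟩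
    rintro x ⟨j, rfl⟩ y ⟨k, rfl⟩ hne
    have hjk : j ≠ k := by
      intro hjk
      exact hne (by rw [hjk])
    exact AD_of_branches_disjoint (hSSperf j).2.1 (hSSperf k).2.1 (hdisjall j k hjk)
  · intro a ha
    refine ⟨?_, ?_, ?_⟩
    · intro T hT
      have hTX : T ∈ X := Set.mem_biUnion ha hT
      rw [hf] at hTX
      obtain ⟨k, rfl⟩ := hTX
      exact ⟨SS k, generators_subset hQAperf ⟨k, rfl⟩, (hmain k).2.1⟩
    · rintro S ⟨T, ⟨k, rfl⟩, s, hs, rfl⟩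
      apply sqfin_mono ((hmain k).1.2.1 a ha)
      exact branches_mono (Tres_subset _ _)
    · rintro S ⟨T, ⟨k, rfl⟩, s, hs, rfl⟩ T' hT'
      have hck := (hmain k).1.2.2 a ha T' hT'
      constructor
      · have hBsub : branches (Tres (SS k) s) ⊆ branches (SS k) :=
          branches_mono (Tres_subset _ _)
        have hm := clopenIn_mono hck.1 hBsub
        apply clopenIn_congr (A := (branches (SS k) ∩ branches T') ∩ branches (Tres (SS k) s))
        · ext x
          simp only [Set.mem_inter_iff]
          constructor
          · rintro ⟨⟨⟨h1, h2⟩, h3⟩, h4⟩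
            exact ⟨⟨h3, h2⟩, h4⟩
          · rintro ⟨⟨h1, h2⟩, h3⟩
            exact ⟨⟨⟨hBsub h1, h2⟩, h1⟩, h3⟩
        · exact hm
      · intro hcon
        exact hck.2 (hcon.trans (Tres_subset _ _))


end
end

section
/- Let π be a regular multiforcing, let x ⊆ |π| be finite, and let U₁, …, U_k be finite collections of multitrees in MT(π), each multitree having domain exactly x. Then there exist finitely many multitrees u₁, …, u_n ∈ MT(π), each with domain x, such that (⋃_{p∈U₁}[p]) ∩ ⋯ ∩ (⋃_{p∈U_k}[p]) = [u₁] ∪ ⋯ ∪ [u_n], and for every i ≤ k and j ≤ n there is p ∈ U_i with [u_j] ⊆ [p]. -/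
noncomputable section

/-- The index set `ω₁ × ω`. -/
abbrev Idx : Type 1 := {xi : Ordinal // xi < (Cardinal.aleph 1).ord} × ℕ

/-- A multitree: a map with finite domain `|p| ⊆ ω₁ × ω` whose values are
perfect trees. -/
structure Multitree : Type 1 where
  dom : Set Idx
  fin : dom.Finite
  val : Idx → Set Str
  perf : ∀ i ∈ dom, IsPerfectTree (val i)

/-- Componentwise ordering of multitrees: `q ≤ p`. -/
def MTle (q p : Multitree) : Prop :=
  p.dom ⊆ q.dom ∧ ∀ i ∈ p.dom, q.val i ⊆ p.val i

/-- Multitrees `p, q` are somewhere almost disjoint. -/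
def SomewhereAD (p q : Multitree) : Prop :=
  ∃ i ∈ p.dom ∩ q.dom, AD (p.val i) (q.val i)

/-- A multiforcing: a map on `|π| ⊆ ω₁ × ω` whose values are perfect-tree
forcing notions. -/
structure Multiforcing : Type 1 where
  dom : Set Idx
  val : Idx → Set (Set Str)
  ptf : ∀ i ∈ dom, IsPTF (val i)

/-- A regular multiforcing: each component is regular. -/
def MFRegular (pi : Multiforcing) : Prop := ∀ i ∈ pi.dom, RegularPTF (pi.val i)

/-- `MT(π)`: the set of multitrees built from `π`. -/
def MT (pi : Multiforcing) : Set Multitree :=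
  {p | p.dom ⊆ pi.dom ∧ ∀ i ∈ p.dom, p.val i ∈ pi.val i}

/-- The cofinite-dimensional cube `[p]` determined by a multitree `p`. -/
def mcube (p : Multitree) : Set (Idx → Pt) :=
  {x | ∀ i ∈ p.dom, x i ∈ branches (p.val i)}
namespace Stmt19aux
open Set

lemma seg_length (a : Pt) (n : ℕ) : (seg a n).length = n := by simp [seg]

lemma seg_eq_seg {a b : Pt} {n : ℕ} : seg a n = seg b n ↔ ∀ i < n, a i = b i := by
  constructor
  · intro h i hi
    have h1 : i < (seg a n).length := by simpa [seg_length] using hi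
    have h2 : i < (seg b n).length := by simpa [seg_length] using hi
    have := List.getElem_of_eq h h1
    simpa [seg] using this
  · intro h
    apply List.ext_getElem (by simp [seg])
    intro i h1 h2
    have hi : i < n := by simpa [seg_length] using h1
    simpa [seg] using h i hi

lemma seg_prefix_seg {a : Pt} {n m : ℕ} (h : n ≤ m) : seg a n <+: seg a m := by
  have : (seg a m).take n = seg a n := by
    simp [seg, ← List.map_take, List.take_range, Nat.min_eq_left h]
  exact this ▸ List.take_prefix n (seg a m)

/-- The basic clopen set of points extending a string. -/
def Ns (s : Str) : Set Pt := {a | seg a s.length = s}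

lemma mem_Ns_seg {a b : Pt} {m : ℕ} : b ∈ Ns (seg a m) ↔ seg b m = seg a m := by
  simp [Ns, seg_length]

lemma mem_Ns_self (a : Pt) (m : ℕ) : a ∈ Ns (seg a m) := mem_Ns_seg.mpr rfl

lemma isOpen_Ns (s : Str) : IsOpen (Ns s) := by
  rw [isOpen_pi_iff]
  intro f hf
  refine ⟨Finset.range s.length, fun i => {f i}, fun i _ => ⟨isOpen_discrete _, rfl⟩, ?_⟩
  intro b hb
  have hb' : ∀ i < s.length, b i = f i := by
    intro i hi
    have := hb i (by simpa using hi)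
    simpa using this
  have : seg b s.length = seg f s.length := seg_eq_seg.mpr hb'
  show seg b s.length = s
  rw [this]; exact hf

lemma isClosed_branches (T : Set Str) : IsClosed (branches T) := by
  rw [← isOpen_compl_iff, isOpen_iff_forall_mem_open]
  intro a ha
  simp only [mem_compl_iff, branches, mem_setOf_eq, not_forall] at ha
  obtain ⟨n, hn⟩ := ha
  refine ⟨Ns (seg a n), ?_, isOpen_Ns _, mem_Ns_self a n⟩
  intro b hb hbT
  exact hn (mem_Ns_seg.mp hb ▸ hbT n)

lemma branches_Tres (S : Set Str) (s : Str) :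
    branches (Tres S s) = branches S ∩ Ns s := by
  ext a
  constructor
  · intro h
    refine ⟨fun n => (h n).1, ?_⟩
    have := (h s.length).2
    rcases this with h1 | h1
    · exact (h1.eq_of_length (by simp [seg_length])).symm
    · exact h1.eq_of_length (by simp [seg_length])
  · rintro ⟨h1, h2⟩ n
    refine ⟨h1 n, ?_⟩
    rcases le_total n s.length with h | h
    · exact Or.inr (h2 ▸ seg_prefix_seg h)
    · exact Or.inl (h2 ▸ seg_prefix_seg h)

lemma exists_Ns_subset {U : Set Pt} (hU : IsOpen U) {a : Pt} (ha : a ∈ U) :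
    ∃ m, Ns (seg a m) ⊆ U := by
  obtain ⟨I, u, hu, hsub⟩ := isOpen_pi_iff.mp hU a ha
  refine ⟨I.sup id + 1, fun b hb => hsub ?_⟩
  intro i hi
  have hi' : i ∈ I := hi
  have hib : b i = a i :=
    seg_eq_seg.mp (mem_Ns_seg.mp hb) i (Nat.lt_succ_of_le (Finset.le_sup (f := id) hi'))
  rw [hib]; exact (hu i hi').2

end Stmt19aux
namespace Stmt19aux
open Set

lemma clopen_cover {S : Set Str} {C : Set Pt} (hCS : C ⊆ branches S)
    (hclo : ClopenIn C (branches S)) :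
    ∃ F : Finset Str, (∀ s ∈ F, s ∈ S) ∧ C = ⋃ s ∈ F, branches (Tres S s) := by
  classical
  haveI : CompactSpace (branches S) :=
    isCompact_iff_compactSpace.mp (isClosed_branches S).isCompact
  obtain ⟨U, hUopen, hUeq⟩ := isOpen_induced_iff.mp hclo.2
  have hC_iff : ∀ b (hb : b ∈ branches S), (b ∈ C ↔ b ∈ U) := by
    intro b hb
    constructor
    · intro h
      have : (⟨b, hb⟩ : branches S) ∈ (fun x : branches S => (x : Pt)) ⁻¹' C := h
      rw [← hUeq] at this; exact this
    · intro h
      have : (⟨b, hb⟩ : branches S) ∈ (fun x : branches S => (x : Pt)) ⁻¹' U := h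
      rw [hUeq] at this; exact this
  have hCcomp : IsCompact C := by
    have h1 : IsCompact ((fun x : branches S => (x : Pt)) ''
        ((fun x : branches S => (x : Pt)) ⁻¹' C)) :=
      (hclo.1.isCompact).image continuous_subtype_val
    have h2 : (fun x : branches S => (x : Pt)) '' ((fun x : branches S => (x : Pt)) ⁻¹' C)
        = C := by
      rw [show (fun x : branches S => (x : Pt)) = Subtype.val from rfl,
        Subtype.image_preimage_coe]
      exact inter_eq_self_of_subset_right hCS
    rwa [h2] at h1
  let m : Pt → ℕ := fun a => if h : a ∈ U then (exists_Ns_subset hUopen h).choose else 0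
  have hm : ∀ a ∈ C, Ns (seg a (m a)) ⊆ U := by
    intro a ha
    have haU : a ∈ U := (hC_iff a (hCS ha)).mp ha
    simp only [m, dif_pos haU]
    exact (exists_Ns_subset hUopen haU).choose_spec
  obtain ⟨t, htC, htcov⟩ := hCcomp.elim_nhds_subcover (fun a => Ns (seg a (m a)))
    (fun a _ => (isOpen_Ns _).mem_nhds (mem_Ns_self a _))
  refine ⟨t.image (fun a => seg a (m a)), ?_, ?_⟩
  · intro s hs
    obtain ⟨a, ha, rfl⟩ := Finset.mem_image.mp hs
    exact hCS (htC a ha) (m a)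
  · ext b
    simp only [mem_iUnion, Finset.mem_image, exists_prop, exists_exists_and_eq_and]
    constructor
    · intro hb
      have hbS := hCS hb
      have := htcov hb
      simp only [mem_iUnion, exists_prop] at this
      obtain ⟨a, ha, hba⟩ := this
      exact ⟨a, ha, (branches_Tres S _).symm ▸ ⟨hbS, hba⟩⟩
    · rintro ⟨a, ha, hb⟩
      rw [branches_Tres] at hb
      exact (hC_iff b hb.1).mpr (hm a (htC a ha) hb.2)

lemma pair_trees {P : Set (Set Str)} (hP : IsPTF P) (hreg : RegularPTF P)
    {S T : Set Str} (hS : S ∈ P) (hT : T ∈ P) :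
    ∃ G : Set (Set Str), G.Finite ∧
      (∀ R ∈ G, R ∈ P ∧ branches R ⊆ branches S ∩ branches T) ∧
      branches S ∩ branches T = ⋃ R ∈ G, branches R := by
  have key : ∀ {A B : Set Str}, A ∈ P → B ∈ P →
      ClopenIn (branches A ∩ branches B) (branches A) →
      ∃ G : Set (Set Str), G.Finite ∧
        (∀ R ∈ G, R ∈ P ∧ branches R ⊆ branches A ∩ branches B) ∧
        branches A ∩ branches B = ⋃ R ∈ G, branches R := by
    intro A B hA hB hclo
    obtain ⟨F, hFS, hFeq⟩ := clopen_cover inter_subset_left hclo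
    refine ⟨(fun s => Tres A s) '' ↑F, ((F.finite_toSet).image _), ?_, ?_⟩
    · rintro R ⟨s, hs, rfl⟩
      refine ⟨hP.2.2 A hA s (hFS s hs), ?_⟩
      rw [hFeq]
      exact subset_biUnion_of_mem (u := fun s => branches (Tres A s)) hs
    · rw [hFeq, biUnion_image]; simp
  rcases hreg S hS T hT with h | h
  · exact key hS hT h
  · obtain ⟨G, hGf, hGp, hGeq⟩ := key hT hS (by rwa [inter_comm])
    rw [inter_comm] at hGp hGeq
    exact ⟨G, hGf, hGp, hGeq⟩
end Stmt19aux
namespace Stmt19aux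
open Set

/-- Choice functions on a finite domain, extended by `∅`. -/
def extChoice (x : Set Idx) (F : Idx → Set (Set Str)) : Set (Idx → Set Str) :=
  {c | (∀ i ∈ x, c i ∈ F i) ∧ ∀ i ∉ x, c i = ∅}

lemma extChoice_finite {x : Set Idx} (hxf : x.Finite) {F : Idx → Set (Set Str)}
    (hF : ∀ i ∈ x, (F i).Finite) : (extChoice x F).Finite := by
  classical
  haveI : Finite ↥x := hxf.to_subtype
  have hpi : (Set.univ.pi (fun i : x => F i.val)).Finite :=
    Set.Finite.pi (fun i => hF i.val i.property)
  have : extChoice x F = (fun g : (↥x → Set Str) =>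
      (fun i => if h : i ∈ x then g ⟨i, h⟩ else ∅)) '' (Set.univ.pi (fun i : x => F i.val)) := by
    ext c
    constructor
    · rintro ⟨h1, h2⟩
      refine ⟨fun i => c i.val, fun i _ => h1 i.val i.property, ?_⟩
      funext i
      by_cases h : i ∈ x
      · simp [h]
      · simp [h, h2 i h]
    · rintro ⟨g, hg, rfl⟩
      constructor
      · intro i hi
        simp only [dif_pos hi]
        exact hg ⟨i, hi⟩ (mem_univ _)
      · intro i hi
        simp [hi]
  rw [this]
  exact hpi.image _

lemma pair_mt (pi : Multiforcing) (hreg : MFRegular pi) (x : Set Idx) (hxf : x.Finite)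
    (hxd : x ⊆ pi.dom) (p q : Multitree) (hp : p ∈ MT pi) (hq : q ∈ MT pi)
    (hpd : p.dom = x) (hqd : q.dom = x) :
    ∃ Z : Set Multitree, Z.Finite ∧
      (∀ u ∈ Z, u ∈ MT pi ∧ u.dom = x ∧ mcube u ⊆ mcube p ∧ mcube u ⊆ mcube q) ∧
      mcube p ∩ mcube q = ⋃ u ∈ Z, mcube u := by
  classical
  have hF : ∀ i ∈ x, ∃ G : Set (Set Str), G.Finite ∧
      (∀ R ∈ G, R ∈ pi.val i ∧ branches R ⊆ branches (p.val i) ∩ branches (q.val i)) ∧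
      branches (p.val i) ∩ branches (q.val i) = ⋃ R ∈ G, branches R := by
    intro i hi
    exact pair_trees (pi.ptf i (hxd hi)) (hreg i (hxd hi))
      (hp.2 i (hpd.symm ▸ hi)) (hq.2 i (hqd.symm ▸ hi))
  let F : Idx → Set (Set Str) := fun i => if h : i ∈ x then (hF i h).choose else ∅
  have hFfin : ∀ i ∈ x, (F i).Finite := fun i hi => by
    simp only [F, dif_pos hi]; exact (hF i hi).choose_spec.1
  have hFmem : ∀ i ∈ x, ∀ R ∈ F i, R ∈ pi.val i ∧
      branches R ⊆ branches (p.val i) ∩ branches (q.val i) := fun i hi => by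
    simp only [F, dif_pos hi]; exact (hF i hi).choose_spec.2.1
  have hFeq : ∀ i ∈ x, branches (p.val i) ∩ branches (q.val i) = ⋃ R ∈ F i, branches R :=
    fun i hi => by
      simp only [F, dif_pos hi]; exact (hF i hi).choose_spec.2.2
  have hperf : ∀ c (_ : c ∈ extChoice x F), ∀ i ∈ x, IsPerfectTree (c i) := by
    intro c hc i hi
    exact (pi.ptf i (hxd hi)).2.1 _ (hFmem i hi _ (hc.1 i hi)).1
  let Z : Set Multitree :=
    {u | ∃ c, ∃ hc : c ∈ extChoice x F, (⟨x, hxf, c, hperf c hc⟩ : Multitree) = u}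
  have hZfin : Z.Finite := (extChoice_finite hxf hFfin).dependent_image _
  have hcube : ∀ c (hc : c ∈ extChoice x F),
      mcube (⟨x, hxf, c, hperf c hc⟩ : Multitree) ⊆ mcube p ∩ mcube q := by
    intro c hc y hy
    constructor
    · intro i hi
      have hi' : i ∈ x := hpd ▸ hi
      exact ((hFmem i hi' _ (hc.1 i hi')).2 (hy i hi')).1
    · intro i hi
      have hi' : i ∈ x := hqd ▸ hi
      exact ((hFmem i hi' _ (hc.1 i hi')).2 (hy i hi')).2
  refine ⟨Z, hZfin, ?_, ?_⟩
  · rintro u ⟨c, hc, rfl⟩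
    refine ⟨⟨hxd, fun i hi => (hFmem i hi _ (hc.1 i hi)).1⟩, rfl,
      fun y hy => (hcube c hc hy).1, fun y hy => (hcube c hc hy).2⟩
  · ext y
    simp only [mem_iUnion, exists_prop]
    constructor
    · rintro ⟨hyp, hyq⟩
      have hch : ∀ i ∈ x, ∃ R ∈ F i, y i ∈ branches R := by
        intro i hi
        have : y i ∈ branches (p.val i) ∩ branches (q.val i) :=
          ⟨hyp i (hpd.symm ▸ hi), hyq i (hqd.symm ▸ hi)⟩
        rw [hFeq i hi] at this
        simpa using this
      let c : Idx → Set Str := fun i => if h : i ∈ x then (hch i h).choose else ∅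
      have hc : c ∈ extChoice x F := by
        constructor
        · intro i hi
          simp only [c, dif_pos hi]
          exact (hch i hi).choose_spec.1
        · intro i hi
          simp [c, hi]
      refine ⟨⟨x, hxf, c, hperf c hc⟩, ⟨c, hc, rfl⟩, ?_⟩
      intro i hi
      simp only [c, dif_pos hi]
      exact (hch i hi).choose_spec.2
    · rintro ⟨u, ⟨c, hc, rfl⟩, hy⟩
      exact hcube c hc hy

end Stmt19aux
namespace Stmt19aux
open Set

lemma bin_mt (pi : Multiforcing) (hreg : MFRegular pi) (x : Set Idx) (hxf : x.Finite)
    (hxd : x ⊆ pi.dom) (V W : Set Multitree) (hVf : V.Finite) (hWf : W.Finite)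
    (hV : ∀ p ∈ V, p ∈ MT pi ∧ p.dom = x) (hW : ∀ q ∈ W, q ∈ MT pi ∧ q.dom = x) :
    ∃ Z : Set Multitree, Z.Finite ∧
      (∀ u ∈ Z, u ∈ MT pi ∧ u.dom = x ∧
        (∃ p ∈ V, mcube u ⊆ mcube p) ∧ (∃ q ∈ W, mcube u ⊆ mcube q)) ∧
      (⋃ p ∈ V, mcube p) ∩ (⋃ q ∈ W, mcube q) = ⋃ u ∈ Z, mcube u := by
  classical
  have H : ∀ p ∈ V, ∀ q ∈ W, ∃ Z : Set Multitree, Z.Finite ∧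
      (∀ u ∈ Z, u ∈ MT pi ∧ u.dom = x ∧ mcube u ⊆ mcube p ∧ mcube u ⊆ mcube q) ∧
      mcube p ∩ mcube q = ⋃ u ∈ Z, mcube u := by
    intro p hp q hq
    exact pair_mt pi hreg x hxf hxd p q (hV p hp).1 (hW q hq).1 (hV p hp).2 (hW q hq).2
  let Zf : Multitree → Multitree → Set Multitree := fun p q =>
    if h : p ∈ V ∧ q ∈ W then (H p h.1 q h.2).choose else ∅
  have hZf : ∀ p ∈ V, ∀ q ∈ W, (Zf p q).Finite ∧
      (∀ u ∈ Zf p q, u ∈ MT pi ∧ u.dom = x ∧ mcube u ⊆ mcube p ∧ mcube u ⊆ mcube q) ∧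
      mcube p ∩ mcube q = ⋃ u ∈ Zf p q, mcube u := by
    intro p hp q hq
    simp only [Zf, dif_pos (And.intro hp hq)]
    exact (H p hp q hq).choose_spec
  refine ⟨⋃ p ∈ V, ⋃ q ∈ W, Zf p q,
    hVf.biUnion (fun p hp => hWf.biUnion (fun q hq => (hZf p hp q hq).1)), ?_, ?_⟩
  · intro u hu
    simp only [mem_iUnion, exists_prop] at hu
    obtain ⟨p, hp, q, hq, hu⟩ := hu
    obtain ⟨h1, h2, h3, h4⟩ := (hZf p hp q hq).2.1 u hu
    exact ⟨h1, h2, ⟨p, hp, h3⟩, ⟨q, hq, h4⟩⟩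
  · ext y
    simp only [mem_inter_iff, mem_iUnion, exists_prop]
    constructor
    · rintro ⟨⟨p, hp, hyp⟩, ⟨q, hq, hyq⟩⟩
      have : y ∈ mcube p ∩ mcube q := ⟨hyp, hyq⟩
      rw [(hZf p hp q hq).2.2] at this
      simp only [mem_iUnion, exists_prop] at this
      obtain ⟨u, hu, hyu⟩ := this
      exact ⟨u, ⟨p, hp, q, hq, hu⟩, hyu⟩
    · rintro ⟨u, ⟨p, hp, q, hq, hu⟩, hyu⟩
      obtain ⟨_, _, h3, h4⟩ := (hZf p hp q hq).2.1 u hu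
      exact ⟨⟨p, hp, h3 hyu⟩, ⟨q, hq, h4 hyu⟩⟩

lemma main_fin (pi : Multiforcing) (hreg : MFRegular pi) (x : Set Idx) (hxf : x.Finite)
    (hxd : x ⊆ pi.dom) :
    ∀ (k : ℕ) (U : Fin (k + 1) → Set Multitree), (∀ i, (U i).Finite) →
      (∀ i, U i ⊆ MT pi) → (∀ i, ∀ p ∈ U i, p.dom = x) →
      ∃ Z : Set Multitree, Z.Finite ∧ (∀ u ∈ Z, u ∈ MT pi ∧ u.dom = x) ∧
        (⋂ i, ⋃ p ∈ U i, mcube p) = ⋃ u ∈ Z, mcube u ∧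
        ∀ (i : Fin (k + 1)), ∀ u ∈ Z, ∃ p ∈ U i, mcube u ⊆ mcube p := by
  intro k
  induction k with
  | zero =>
    intro U hUf hUm hUd
    refine ⟨U 0, hUf 0, fun u hu => ⟨hUm 0 hu, hUd 0 u hu⟩, ?_, ?_⟩
    · ext y
      simp only [mem_iInter]
      exact ⟨fun h => h 0, fun h i => Fin.cases h (fun j => j.elim0) i⟩
    · intro i u hu
      have : i = 0 := Fin.ext (by omega)
      exact this ▸ ⟨u, hu, subset_rfl⟩
  | succ k ih =>
    intro U hUf hUm hUd
    obtain ⟨Z₀, hZ₀f, hZ₀p, hZ₀eq, hZ₀ref⟩ := ih (fun i => U i.succ)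
      (fun i => hUf i.succ) (fun i => hUm i.succ) (fun i => hUd i.succ)
    obtain ⟨Z, hZf, hZp, hZeq⟩ := bin_mt pi hreg x hxf hxd (U 0) Z₀ (hUf 0) hZ₀f
      (fun p hp => ⟨hUm 0 hp, hUd 0 p hp⟩) hZ₀p
    refine ⟨Z, hZf, fun u hu => ⟨(hZp u hu).1, (hZp u hu).2.1⟩, ?_, ?_⟩
    · have hsplit : (⋂ i, ⋃ p ∈ U i, mcube p) =
          (⋃ p ∈ U 0, mcube p) ∩ (⋂ i : Fin (k + 1), ⋃ p ∈ U i.succ, mcube p) := by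
        ext y
        simp only [mem_inter_iff, mem_iInter, Fin.forall_fin_succ]
      rw [hsplit, hZ₀eq, hZeq]
    · intro i u hu
      induction i using Fin.cases with
      | zero => exact (hZp u hu).2.2.1
      | succ j =>
        obtain ⟨w, hw, huw⟩ := (hZp u hu).2.2.2
        obtain ⟨p, hp, hwp⟩ := hZ₀ref j w hw
        exact ⟨p, hp, huw.trans hwp⟩

end Stmt19aux

/-- Lemma 2.15 (regfm): in a regular multiforcing, an intersection of finite
unions of cubes of multitrees with common finite domain `x` is a finite
union of cubes of multitrees with domain `x`, each refining a cube from
each collection. -/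
theorem stmt19 (pi : Multiforcing) (hreg : MFRegular pi)
    (x : Set Idx) (hxf : x.Finite) (hxd : x ⊆ pi.dom)
    (k : ℕ) (hk : 0 < k) (U : Fin k → Set Multitree)
    (hUf : ∀ i, (U i).Finite) (hUm : ∀ i, U i ⊆ MT pi)
    (hUd : ∀ i, ∀ p ∈ U i, p.dom = x) :
    ∃ (n : ℕ) (u : Fin n → Multitree),
      (∀ j, u j ∈ MT pi ∧ (u j).dom = x) ∧
      (⋂ i, ⋃ p ∈ U i, mcube p) = (⋃ j, mcube (u j)) ∧
      ∀ (i : Fin k) (j : Fin n), ∃ p ∈ U i, mcube (u j) ⊆ mcube p := by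
  classical
  obtain ⟨k', rfl⟩ : ∃ k', k = k' + 1 := ⟨k - 1, (Nat.succ_pred_eq_of_pos hk).symm⟩
  obtain ⟨Z, hZf, hZp, hZeq, hZref⟩ :=
    Stmt19aux.main_fin pi hreg x hxf hxd k' U hUf hUm hUd
  let e := hZf.toFinset.equivFin
  refine ⟨hZf.toFinset.card, fun j => ((e.symm j : hZf.toFinset) : Multitree), ?_, ?_, ?_⟩
  · intro j
    have : ((e.symm j : hZf.toFinset) : Multitree) ∈ Z :=
      hZf.mem_toFinset.mp (e.symm j).property
    exact hZp _ this
  · rw [hZeq]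
    ext y
    simp only [Set.mem_iUnion]
    constructor
    · rintro ⟨u, hu, hyu⟩
      exact ⟨e ⟨u, hZf.mem_toFinset.mpr hu⟩, by simpa [e.symm_apply_apply] using hyu⟩
    · rintro ⟨j, hyj⟩
      exact ⟨_, hZf.mem_toFinset.mp (e.symm j).property, hyj⟩
  · intro i j
    exact hZref i _ (hZf.mem_toFinset.mp (e.symm j).property)

end
end
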